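/- Let n ≥ m+2 and H a graph. If γ_gr(H) ≥ m+1 then γ_gr(P_n^m ∘ H) = ⌈n/(m+1)⌉·(γ_gr(H) − (m+1)) + n + m, and if γ_gr(H) ≤ m then γ_gr(P_n^m ∘ H) = 2γ_gr(H) + n − m − 2. -/

import Mathlib

namespace GrundyDom

/-- Closed neighborhood N[v]. -/
def cn {V : Type*} (G : SimpleGraph V) (v : V) : Set V := insert v (G.neighborSet v)

/-- Union of closed neighborhoods of the vertices of a list. -/
def cnUnion {V : Type*} (G : SimpleGraph V) (L : List V) : Set V := ⋃ v ∈ L, cn G v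

/-- Private neighborhood of `v` with respect to the first `i` entries of `S`:
`N[v] \ (N[v_1] ∪ ... ∪ N[v_i])`. -/
def PN {V : Type*} (G : SimpleGraph V) (S : List V) (i : ℕ) (v : V) : Set V :=
  cn G v \ cnUnion G (S.take i)

/-- A legal dominating sequence: distinct vertices, dominating set, and every
vertex of the sequence has a nonempty private neighborhood w.r.t. its predecessors. -/
structure IsLegal {V : Type*} (G : SimpleGraph V) (S : List V) : Prop where
  nodup : S.Nodup
  dominates : ∀ v : V, ∃ u ∈ S, v ∈ cn G u
  legal : ∀ i : Fin S.length, (PN G S i.val (S.get i)).Nonempty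

/-- The set `I_S` of vertices that footprint themselves in `S`. -/
def selfFoot {V : Type*} (G : SimpleGraph V) (S : List V) : Set V :=
  {v | ∃ i : Fin S.length, S.get i = v ∧ v ∈ PN G S i.val v}

/-- Grundy domination number: maximum length of a legal dominating sequence. -/
noncomputable def gammaGr {V : Type*} (G : SimpleGraph V) : ℕ :=
  sSup {k | ∃ S : List V, IsLegal G S ∧ S.length = k}

/-- `γ_gr(G, I)`: maximum length of a legal dominating sequence `S` with `I_S = I`. -/
noncomputable def gammaGrOn {V : Type*} (G : SimpleGraph V) (I : Set V) : ℕ :=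
  sSup {k | ∃ S : List V, IsLegal G S ∧ selfFoot G S = I ∧ S.length = k}

/-- `γ_gr^u(G)`: maximum of `γ_gr(G, I)` over independent sets `I` containing `u`. -/
noncomputable def gammaGrVert {V : Type*} (G : SimpleGraph V) (u : V) : ℕ :=
  sSup {k | ∃ I : Set V, (∀ ⦃a⦄, a ∈ I → ∀ ⦃b⦄, b ∈ I → a ≠ b → ¬ G.Adj a b) ∧
    u ∈ I ∧ k = gammaGrOn G I}

/-- Independent set of a graph. -/
def IsIndep {V : Type*} (G : SimpleGraph V) (I : Set V) : Prop :=
  ∀ ⦃u⦄, u ∈ I → ∀ ⦃v⦄, v ∈ I → u ≠ v → ¬ G.Adj u v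

/-- The X-join product `G ↩ 𝓡`: replace each vertex `v` of `G` by the graph `R v`. -/
def XJoin {V : Type*} (G : SimpleGraph V) {W : V → Type*} (R : ∀ v, SimpleGraph (W v)) :
    SimpleGraph (Σ v, W v) where
  Adj x y := G.Adj x.1 y.1 ∨ ∃ h : x.1 = y.1, (R y.1).Adj (h ▸ x.2) y.2
  symm := ⟨by
    rintro ⟨a, xa⟩ ⟨b, yb⟩ (h | ⟨h, hadj⟩)
    · exact Or.inl h.symm
    · dsimp at h hadj
      subst h
      exact Or.inr ⟨rfl, (R a).symm.symm _ _ hadj⟩⟩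
  loopless := ⟨by
    rintro ⟨a, xa⟩ (h | ⟨h, hadj⟩)
    · exact G.loopless.irrefl a h
    · exact (R a).loopless.irrefl xa hadj⟩

/-- The lexicographic product `G ∘ H`. -/
def Lex {V W : Type*} (G : SimpleGraph V) (H : SimpleGraph W) : SimpleGraph (V × W) where
  Adj x y := G.Adj x.1 y.1 ∨ (x.1 = y.1 ∧ H.Adj x.2 y.2)
  symm := ⟨by
    rintro x y (h | ⟨h1, h2⟩)
    · exact Or.inl h.symm
    · exact Or.inr ⟨h1.symm, h2.symm⟩⟩
  loopless := ⟨by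
    rintro x (h | ⟨_, h⟩)
    · exact G.loopless.irrefl _ h
    · exact H.loopless.irrefl _ h⟩

/-- The replacement graph `G_{u ↩ H}`: replace the vertex `u` of `G` by `H`. -/
def Replace {V : Type*} (G : SimpleGraph V) (u : V) {W : Type*} (H : SimpleGraph W) :
    SimpleGraph ({v : V // v ≠ u} ⊕ W) where
  Adj x y :=
    match x, y with
    | Sum.inl a, Sum.inl b => G.Adj a.1 b.1
    | Sum.inl a, Sum.inr _ => G.Adj a.1 u
    | Sum.inr _, Sum.inl b => G.Adj u b.1
    | Sum.inr h1, Sum.inr h2 => H.Adj h1 h2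
  symm := ⟨by rintro (a|a) (b|b) h <;> exact h.symm⟩
  loopless := ⟨by rintro (a|a) h <;> exact h.ne rfl⟩

/-- `C_n^m`: the m-th power of the n-cycle, on vertex set `ZMod n`;
two vertices are adjacent iff their circular distance is between 1 and m. -/
def cyclePow (n m : ℕ) : SimpleGraph (ZMod n) where
  Adj i j := i ≠ j ∧ ∃ k : ℕ, 1 ≤ k ∧ k ≤ m ∧ (j = i + k ∨ i = j + k)
  symm := ⟨by
    rintro i j ⟨hne, k, h1, h2, h3⟩
    exact ⟨hne.symm, k, h1, h2, h3.symm⟩⟩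
  loopless := ⟨fun i h => h.1 rfl⟩

/-- `P_n^m`: the m-th power of the n-path, on vertex set `Fin n`
(vertex `i` represents the `(i+1)`-st vertex of the path);
two vertices adjacent iff their distance is between 1 and m. -/
def pathPow (n m : ℕ) : SimpleGraph (Fin n) where
  Adj i j := i ≠ j ∧ Nat.dist i.val j.val ≤ m
  symm := ⟨by
    rintro i j ⟨hne, hd⟩
    exact ⟨hne.symm, by rwa [Nat.dist_comm]⟩⟩
  loopless := ⟨fun i h => h.1 rfl⟩

end GrundyDom

open GrundyDom Finset

namespace GrundyDom

section Basic
variable {V : Type*} (G : SimpleGraph V)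

lemma mem_cn_self (v : V) : v ∈ cn G v := Set.mem_insert _ _

lemma mem_cn_iff {u v : V} : u ∈ cn G v ↔ u = v ∨ G.Adj v u := by
  simp [cn, SimpleGraph.mem_neighborSet]

lemma mem_cnUnion {L : List V} {x : V} : x ∈ cnUnion G L ↔ ∃ v ∈ L, x ∈ cn G v := by
  simp [cnUnion]

lemma cnUnion_subset_of_sub {L L' : List V} (h : ∀ v ∈ L, v ∈ L') :
    cnUnion G L ⊆ cnUnion G L' := by
  intro x hx
  rw [mem_cnUnion] at hx ⊢
  obtain ⟨v, hv, hx⟩ := hx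
  exact ⟨v, h v hv, hx⟩

lemma mem_cnUnion_take {S : List V} {i : ℕ} {x : V} :
    x ∈ cnUnion G (S.take i) ↔ ∃ s : ℕ, ∃ h : s < S.length, s < i ∧ x ∈ cn G (S.get ⟨s, h⟩) := by
  rw [mem_cnUnion]
  constructor
  · rintro ⟨v, hv, hx⟩
    obtain ⟨s, hs, rfl⟩ := List.mem_iff_getElem.mp hv
    rw [List.length_take] at hs
    refine ⟨s, lt_of_lt_of_le hs (min_le_right _ _), lt_of_lt_of_le hs (min_le_left _ _), ?_⟩
    rwa [List.getElem_take] at hx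
  · rintro ⟨s, h, hsi, hx⟩
    refine ⟨S.get ⟨s, h⟩, ?_, hx⟩
    rw [List.mem_iff_getElem]
    refine ⟨s, by simp [List.length_take]; omega, ?_⟩
    simp [List.getElem_take]

/-- legal but not necessarily dominating -/
def Pre (S : List V) : Prop :=
  S.Nodup ∧ ∀ i : Fin S.length, (PN G S i.val (S.get i)).Nonempty

lemma IsLegal.pre {S : List V} (h : IsLegal G S) : Pre G S := ⟨h.nodup, h.legal⟩

lemma dominates_iff {S : List V} :
    (∀ v : V, ∃ u ∈ S, v ∈ cn G u) ↔ cnUnion G S = Set.univ := by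
  constructor
  · intro h
    ext x
    simp only [Set.mem_univ, iff_true, mem_cnUnion]
    exact h x
  · intro h v
    have : v ∈ cnUnion G S := by rw [h]; trivial
    rwa [mem_cnUnion] at this

lemma isLegal_iff {S : List V} : IsLegal G S ↔ Pre G S ∧ cnUnion G S = Set.univ := by
  constructor
  · intro h
    exact ⟨h.pre, (dominates_iff G).mp h.dominates⟩
  · rintro ⟨⟨h1, h2⟩, h3⟩
    exact ⟨h1, (dominates_iff G).mpr h3, h2⟩

lemma pre_append {S : List V} {u : V} (hS : Pre G S)
    (hnew : ∃ v ∈ cn G u, v ∉ cnUnion G S) : Pre G (S ++ [u]) := by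
  obtain ⟨v, hv, hvn⟩ := hnew
  have hu : u ∉ S := by
    intro hu
    exact hvn ((mem_cnUnion G).mpr ⟨u, hu, hv⟩)
  constructor
  · simpa [List.nodup_append] using ⟨hS.1, fun a ha hau => hu (hau ▸ ha)⟩
  · intro i
    rcases lt_or_eq_of_le (Nat.lt_succ_iff.mp (by simpa using i.isLt)) with hi | hi
    · -- old index
      have hget : (S ++ [u]).get i = S.get ⟨i.val, hi⟩ := by
        simp [List.get_eq_getElem, List.getElem_append_left hi]
      have htake : (S ++ [u]).take i.val = S.take i.val := by
        rw [List.take_append_of_le_length (le_of_lt hi)]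
      obtain ⟨x, hx⟩ := hS.2 ⟨i.val, hi⟩
      refine ⟨x, ?_⟩
      rw [PN] at hx ⊢
      rw [hget, htake]
      exact hx
    · -- new index
      have hget : (S ++ [u]).get i = u := by
        simp [List.get_eq_getElem, hi, List.getElem_append_right (le_of_eq hi.symm)]
      have htake : (S ++ [u]).take i.val = S := by
        rw [hi, List.take_append_of_le_length (le_refl _)]
        simp
      refine ⟨v, ?_⟩
      rw [PN, hget, htake]
      exact ⟨hv, hvn⟩

variable [Fintype V]

lemma pre_extend {S : List V} (hS : Pre G S) :
    ∃ T : List V, IsLegal G T ∧ S.length ≤ T.length ∧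
      (cnUnion G S ≠ Set.univ → S.length < T.length) := by
  classical
  generalize hN : (Set.univ \ cnUnion G S).ncard = N
  induction N using Nat.strong_induction_on generalizing S with
  | _ N ih =>
    by_cases hdom : cnUnion G S = Set.univ
    · exact ⟨S, (isLegal_iff G).mpr ⟨hS, hdom⟩, le_refl _, fun h => absurd hdom h⟩
    · have hne : (Set.univ \ cnUnion G S).Nonempty := by
        rw [Set.diff_nonempty]
        intro h
        exact hdom (Set.eq_univ_of_univ_subset h)
      obtain ⟨v, hv⟩ := hne
      have hvn : v ∉ cnUnion G S := hv.2
      have hpre' : Pre G (S ++ [v]) := pre_append G hS ⟨v, mem_cn_self G v, hvn⟩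
      have hsub : cnUnion G S ⊆ cnUnion G (S ++ [v]) :=
        cnUnion_subset_of_sub G (fun x hx => List.mem_append_left _ hx)
      have hlt : (Set.univ \ cnUnion G (S ++ [v])).ncard < N := by
        rw [← hN]
        apply Set.ncard_lt_ncard
        · constructor
          · exact Set.diff_subset_diff_right hsub
          · intro h
            have : v ∈ Set.univ \ cnUnion G (S ++ [v]) := h ⟨trivial, hvn⟩
            exact this.2 ((mem_cnUnion G).mpr ⟨v, by simp, mem_cn_self G v⟩)
        · exact Set.toFinite _
      obtain ⟨T, hT, hlen, _⟩ := ih _ hlt hpre' rfl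
      refine ⟨T, hT, ?_, fun _ => ?_⟩ <;>
        · have := @List.length_append _ S [v] ▸ hlen
          simp at this
          omega

lemma length_le_card {S : List V} (hS : Pre G S) : S.length ≤ Fintype.card V :=
  List.Nodup.length_le_card hS.1

lemma bddAbove_lengths : BddAbove {k | ∃ S : List V, IsLegal G S ∧ S.length = k} := by
  refine ⟨Fintype.card V, ?_⟩
  rintro k ⟨S, hS, rfl⟩
  exact length_le_card G hS.pre

lemma exists_isLegal : ∃ S : List V, IsLegal G S := by
  obtain ⟨T, hT, -, -⟩ := pre_extend G (S := []) ⟨List.nodup_nil, fun i => absurd i.isLt (by simp)⟩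
  exact ⟨T, hT⟩

lemma gammaGr_spec : ∃ S : List V, IsLegal G S ∧ S.length = gammaGr G := by
  have hne : {k | ∃ S : List V, IsLegal G S ∧ S.length = k}.Nonempty := by
    obtain ⟨S, hS⟩ := exists_isLegal G
    exact ⟨S.length, S, hS, rfl⟩
  exact Nat.sSup_mem hne (bddAbove_lengths G)

lemma le_gammaGr_of_pre {S : List V} (hS : Pre G S) : S.length ≤ gammaGr G := by
  obtain ⟨T, hT, hlen, -⟩ := pre_extend G hS
  exact le_trans hlen (le_csSup (bddAbove_lengths G) ⟨T, hT, rfl⟩)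

lemma lt_gammaGr_of_pre_not_dom {S : List V} (hS : Pre G S)
    (h : cnUnion G S ≠ Set.univ) : S.length < gammaGr G := by
  obtain ⟨T, hT, -, hlt⟩ := pre_extend G hS
  exact lt_of_lt_of_le (hlt h) (le_csSup (bddAbove_lengths G) ⟨T, hT, rfl⟩)

end Basic
end GrundyDom
namespace GrundyDom
section Indexed
variable {V : Type*} (G : SimpleGraph V)

lemma pre_iff_indexed {l : List V} :
    Pre G l ↔ l.Nodup ∧ ∀ i : ℕ, ∀ h : i < l.length,
      ∃ x ∈ cn G (l.get ⟨i, h⟩), ∀ s : ℕ, ∀ hs : s < l.length, s < i → x ∉ cn G (l.get ⟨s, hs⟩) := by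
  constructor
  · rintro ⟨h1, h2⟩
    refine ⟨h1, fun i h => ?_⟩
    obtain ⟨x, hx1, hx2⟩ := h2 ⟨i, h⟩
    refine ⟨x, hx1, fun s hs hsi hmem => hx2 ?_⟩
    exact (mem_cnUnion_take G).mpr ⟨s, hs, hsi, hmem⟩
  · rintro ⟨h1, h2⟩
    refine ⟨h1, fun i => ?_⟩
    obtain ⟨x, hx1, hx2⟩ := h2 i.val i.isLt
    refine ⟨x, hx1, fun hmem => ?_⟩
    obtain ⟨s, hs, hsi, hmem'⟩ := (mem_cnUnion_take G).mp hmem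
    exact hx2 s hs hsi hmem'

end Indexed

section LexCn
variable {n m : ℕ} {W : Type*} (H : SimpleGraph W)

lemma mem_cn_lex {i j : Fin n} {w x : W} :
    (j, x) ∈ cn (Lex (pathPow n m) H) (i, w) ↔
      (j = i ∧ x ∈ cn H w) ∨ (j ≠ i ∧ Nat.dist i.val j.val ≤ m) := by
  simp only [cn, Set.mem_insert_iff, SimpleGraph.mem_neighborSet, Lex, pathPow, Prod.mk.injEq,
    mem_cn_iff]
  constructor
  · rintro (⟨rfl, rfl⟩ | (⟨hne, hd⟩ | ⟨rfl, hadj⟩))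
    · exact Or.inl ⟨rfl, Or.inl rfl⟩
    · exact Or.inr ⟨Ne.symm hne, hd⟩
    · exact Or.inl ⟨rfl, Or.inr hadj⟩
  · rintro (⟨rfl, (rfl | hadj)⟩ | ⟨hne, hd⟩)
    · exact Or.inl ⟨rfl, rfl⟩
    · exact Or.inr (Or.inr ⟨rfl, hadj⟩)
    · exact Or.inr (Or.inl ⟨Ne.symm hne, hd⟩)

end LexCn
end GrundyDom
namespace GrundyDom
section Upper
open scoped Classical
variable {n : ℕ} {W : Type*}

/-- column of the t-th pick -/
def colF (S : List (Fin n × W)) (d0 : Fin n × W) (t : ℕ) : Fin n := (S.getD t d0).1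
/-- H-component of the t-th pick -/
def wvF (S : List (Fin n × W)) (d0 : Fin n × W) (t : ℕ) : W := (S.getD t d0).2
/-- coverage after t picks -/
def covF (H : SimpleGraph W) (m : ℕ) (S : List (Fin n × W)) (t : ℕ) (v : Fin n × W) : Prop :=
  v ∈ cnUnion (Lex (pathPow n m) H) (S.take t)
/-- pick t footprints inside its own column -/
def insideF (H : SimpleGraph W) (m : ℕ) (S : List (Fin n × W)) (d0 : Fin n × W) (t : ℕ) : Prop :=
  t < S.length ∧ ∃ x ∈ cn H (wvF S d0 t), ¬ covF H m S t (colF S d0 t, x)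
/-- pick t is at a column ≠ j within distance m of j -/
def outerF (m : ℕ) (S : List (Fin n × W)) (d0 : Fin n × W) (t : ℕ) (j : Fin n) : Prop :=
  t < S.length ∧ colF S d0 t ≠ j ∧ Nat.dist (colF S d0 t).val j.val ≤ m

variable (H : SimpleGraph W) (m : ℕ) (S : List (Fin n × W)) (d0 : Fin n × W)

noncomputable def DsetF : Finset (Fin n) := Finset.univ.filter (fun j => ∃ t, insideF H m S d0 t ∧ colF S d0 t = j)
def hasOpF (j : Fin n) : Prop := ∃ t, outerF m S d0 t j
noncomputable def opF (j : Fin n) : ℕ := sInf {t | outerF m S d0 t j}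
def eventedF (j : Fin n) : Prop := hasOpF m S d0 j ∧ ∃ x, ¬ covF H m S (opF m S d0 j) (j, x)
noncomputable def AsetF : Finset (Fin n) :=
  Finset.univ.filter (fun j => eventedF H m S d0 j ∧ insideF H m S d0 (opF m S d0 j))
noncomputable def ZsetF : Finset (Fin n) := Finset.univ.filter (fun j => ¬ eventedF H m S d0 j)

variable {H m S d0}

lemma cov_mono {t t' : ℕ} (h : t ≤ t') {v : Fin n × W} (hv : covF H m S t v) :
    covF H m S t' v := by
  unfold covF at hv ⊢
  refine cnUnion_subset_of_sub _ (fun u hu => ?_) hv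
  have he : List.take t S = List.take t (List.take t' S) := by
    rw [List.take_take, min_eq_left h]
  rw [he] at hu
  exact List.mem_of_mem_take hu

lemma cov_zero {v : Fin n × W} : ¬ covF H m S 0 v := by
  unfold covF cnUnion
  simp

lemma cov_succ {t : ℕ} (ht : t < S.length) {v : Fin n × W} :
    covF H m S (t + 1) v ↔ covF H m S t v ∨ v ∈ cn (Lex (pathPow n m) H) (S.get ⟨t, ht⟩) := by
  unfold covF
  rw [List.take_succ]
  simp only [List.getElem?_eq_getElem ht, Option.toList_some]
  rw [mem_cnUnion, mem_cnUnion]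
  constructor
  · rintro ⟨u, hu, hv⟩
    rcases List.mem_append.mp hu with h | h
    · exact Or.inl ⟨u, h, hv⟩
    · simp at h
      subst h
      exact Or.inr hv
  · rintro (⟨u, hu, hv⟩ | hv)
    · exact ⟨u, List.mem_append_left _ hu, hv⟩
    · exact ⟨_, List.mem_append_right _ (by simp), hv⟩

lemma get_eq_pk {t : ℕ} (ht : t < S.length) : S.get ⟨t, ht⟩ = (colF S d0 t, wvF S d0 t) := by
  unfold colF wvF
  rw [List.getD_eq_getElem S d0 ht]
  rfl

lemma cov_of_outer {t : ℕ} {j : Fin n} (h : outerF m S d0 t j) {t' : ℕ} (htt' : t < t')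
    (x : W) : covF H m S t' (j, x) := by
  obtain ⟨ht, hne, hd⟩ := h
  refine cov_mono htt' ?_
  rw [cov_succ ht, get_eq_pk (d0 := d0) ht]
  exact Or.inr (by rw [mem_cn_lex]; exact Or.inr ⟨hne.symm, hd⟩)

lemma cov_of_inside_col {t : ℕ} (ht : t < S.length) {x : W} (hx : x ∈ cn H (wvF S d0 t))
    {t' : ℕ} (htt' : t < t') : covF H m S t' (colF S d0 t, x) := by
  refine cov_mono htt' ?_
  rw [cov_succ ht, get_eq_pk (d0 := d0) ht]
  exact Or.inr (by rw [mem_cn_lex]; exact Or.inl ⟨rfl, hx⟩)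

lemma cov_cases {t : ℕ} {j : Fin n} {x : W} (h : covF H m S t (j, x)) :
    (∃ s, s < t ∧ outerF m S d0 s j) ∨
    (∃ s, s < t ∧ s < S.length ∧ colF S d0 s = j ∧ x ∈ cn H (wvF S d0 s)) := by
  unfold covF at h
  obtain ⟨s, hs, hst, hmem⟩ := (mem_cnUnion_take _).mp h
  rw [get_eq_pk (d0 := d0) hs] at hmem
  rw [mem_cn_lex] at hmem
  rcases hmem with ⟨hje, hx⟩ | ⟨hne, hd⟩
  · exact Or.inr ⟨s, hst, hs, hje.symm ▸ rfl, hx⟩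
  · refine Or.inl ⟨s, hst, hs, Ne.symm hne, ?_⟩
    have := Nat.dist_comm (colF S d0 s).val j.val
    omega

lemma notD_empty {j : Fin n} (hj : j ∉ DsetF H m S d0) {t : ℕ}
    (hno : ∀ s, s < t → ¬ outerF m S d0 s j) (x : W) : ¬ covF H m S t (j, x) := by
  induction t using Nat.strong_induction_on generalizing x with
  | _ t ih =>
    intro hcov
    rcases cov_cases (d0 := d0) hcov with ⟨s, hst, ho⟩ | ⟨s, hst, hs, hcol, hx⟩
    · exact hno s hst ho
    · -- pick s at column j; since j ∉ D it is not inside, so (j, wv s) was covered at s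
      have hnotin : ¬ insideF H m S d0 s := by
        intro hin
        simp only [DsetF, Finset.mem_filter, Finset.mem_univ, true_and] at hj
        exact hj ⟨s, hin, hcol⟩
      unfold insideF at hnotin
      push_neg at hnotin
      have hcv := hnotin hs x hx
      rw [hcol] at hcv
      exact ih s hst (fun s' hs' => hno s' (lt_trans hs' hst)) x hcv

lemma op_spec {j : Fin n} (h : hasOpF m S d0 j) :
    outerF m S d0 (opF m S d0 j) j ∧ ∀ s, s < opF m S d0 j → ¬ outerF m S d0 s j := by
  constructor
  · exact Nat.sInf_mem h
  · intro s hs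
    exact Nat.notMem_of_lt_sInf hs

lemma op_le {j : Fin n} {t : ℕ} (h : outerF m S d0 t j) : opF m S d0 j ≤ t :=
  Nat.sInf_le h

lemma inside_lt_op {t : ℕ} {j : Fin n} (hin : insideF H m S d0 t) (hcol : colF S d0 t = j)
    (h : hasOpF m S d0 j) : t < opF m S d0 j := by
  by_contra hle
  push_neg at hle
  obtain ⟨hout, _⟩ := op_spec h
  rcases lt_or_eq_of_le hle with hlt | heq
  · obtain ⟨ht, x, hx, hncov⟩ := hin
    exact hncov (hcol ▸ cov_of_outer (H := H) hout hlt x)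
  · exact hout.2.1 (heq ▸ hcol)

lemma nonD_evented [Nonempty W] (hS : IsLegal (Lex (pathPow n m) H) S) {j : Fin n}
    (hj : j ∉ DsetF H m S d0) : eventedF H m S d0 j := by
  have hx0 : ∃ x : W, True := ⟨Classical.arbitrary W, trivial⟩
  obtain ⟨x0, -⟩ := hx0
  have hop : hasOpF m S d0 j := by
    by_contra hno
    have hnone : ∀ s, s < S.length → ¬ outerF m S d0 s j := fun s _ ho => hno ⟨s, ho⟩
    have : ¬ covF H m S S.length (j, x0) :=
      notD_empty hj (fun s hs => hnone s hs) x0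
    apply this
    unfold covF
    rw [List.take_length]
    exact (dominates_iff _).mp hS.dominates ▸ trivial
  refine ⟨hop, x0, ?_⟩
  exact notD_empty hj (fun s hs => (op_spec hop).2 s hs) x0

lemma legal_priv (hS : IsLegal (Lex (pathPow n m) H) S) {t : ℕ} (ht : t < S.length) :
    ∃ v ∈ cn (Lex (pathPow n m) H) (S.get ⟨t, ht⟩), ¬ covF H m S t v := by
  obtain ⟨v, hv1, hv2⟩ := hS.legal ⟨t, ht⟩
  exact ⟨v, hv1, hv2⟩

lemma pure_priv (hS : IsLegal (Lex (pathPow n m) H) S) {t : ℕ} (ht : t < S.length)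
    (hpure : ¬ insideF H m S d0 t) :
    ∃ j : Fin n, outerF m S d0 t j ∧ ∃ x, ¬ covF H m S t (j, x) := by
  obtain ⟨⟨j, x⟩, hv1, hv2⟩ := legal_priv hS ht
  rw [get_eq_pk (d0 := d0) ht, mem_cn_lex] at hv1
  rcases hv1 with ⟨hje, hx⟩ | ⟨hne, hd⟩
  · exfalso
    exact hpure ⟨ht, x, hx, hje ▸ hv2⟩
  · refine ⟨j, ⟨ht, Ne.symm hne, ?_⟩, x, hv2⟩
    have := Nat.dist_comm (colF S d0 t).val j.val
    omega

lemma op_eq_of_footprint {t : ℕ} {j : Fin n} (ho : outerF m S d0 t j) {x : W}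
    (hx : ¬ covF H m S t (j, x)) : opF m S d0 j = t := by
  refine le_antisymm (op_le ho) ?_
  by_contra hlt
  push_neg at hlt
  have hmem := Nat.sInf_mem (⟨t, ho⟩ : ∃ s, outerF m S d0 s j)
  exact hx (cov_of_outer hmem hlt x)

lemma D_nonempty [Nonempty W] (hS : IsLegal (Lex (pathPow n m) H) S) (hn0 : 0 < n) :
    (DsetF H m S d0).Nonempty := by
  have hlen : 0 < S.length := by
    rcases S with _ | ⟨a, S'⟩
    · obtain ⟨u, hu, -⟩ := hS.dominates (⟨⟨0, hn0⟩, Classical.arbitrary W⟩)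
      simp at hu
    · simp
  refine ⟨colF S d0 0, ?_⟩
  simp only [DsetF, Finset.mem_filter, Finset.mem_univ, true_and]
  exact ⟨0, ⟨hlen, wvF S d0 0, mem_cn_self _ _, cov_zero⟩, rfl⟩

lemma D_sep {j j' : Fin n} (hj : j ∈ DsetF H m S d0) (hj' : j' ∈ DsetF H m S d0)
    (hne : j ≠ j') : m + 1 ≤ Nat.dist j.val j'.val := by
  by_contra hlt
  push_neg at hlt
  simp only [DsetF, Finset.mem_filter, Finset.mem_univ, true_and] at hj hj'
  obtain ⟨t, hin, hcol⟩ := hj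
  obtain ⟨t', hin', hcol'⟩ := hj'
  have ho : outerF m S d0 t' j := ⟨hin'.1, by rw [hcol']; exact hne.symm, by
    rw [hcol', Nat.dist_comm]; omega⟩
  have ho' : outerF m S d0 t j' := ⟨hin.1, by rw [hcol]; exact hne, by rw [hcol]; omega⟩
  have h1 : t < opF m S d0 j := inside_lt_op hin hcol ⟨t', ho⟩
  have h2 : t' < opF m S d0 j' := inside_lt_op hin' hcol' ⟨t, ho'⟩
  have h3 := op_le ho
  have h4 := op_le ho'
  omega

end Upper
end GrundyDom
namespace GrundyDom
section Upper2
open scoped Classical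
variable {n : ℕ} {W : Type*} {H : SimpleGraph W} {m : ℕ} {S : List (Fin n × W)} {d0 : Fin n × W}

lemma ndist_eq (a b : ℕ) : Nat.dist a b = a - b + (b - a) := Nat.dist.eq_1 a b

lemma mem_D_iff {j : Fin n} :
    j ∈ DsetF H m S d0 ↔ ∃ t, insideF H m S d0 t ∧ colF S d0 t = j := by
  simp [DsetF]

lemma inside_of_op_at_D {c0 x : Fin n} (hc0 : c0 ∉ DsetF H m S d0) (hxD : x ∈ DsetF H m S d0)
    (hop : hasOpF m S d0 c0) (hcolθ : colF S d0 (opF m S d0 c0) = x) :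
    insideF H m S d0 (opF m S d0 c0) := by
  obtain ⟨hout, hmin⟩ := op_spec hop
  set θ := opF m S d0 c0 with hθ
  have hxc0 : x ≠ c0 := hcolθ ▸ hout.2.1
  have hdxc0 : Nat.dist x.val c0.val ≤ m := hcolθ ▸ hout.2.2
  by_contra hni
  unfold insideF at hni
  push_neg at hni
  have hcov : covF H m S θ (x, wvF S d0 θ) := by
    have := hni hout.1 (wvF S d0 θ) (mem_cn_self _ _)
    rwa [hcolθ] at this
  rcases cov_cases (d0 := d0) hcov with ⟨s, hsθ, ho⟩ | ⟨s, hsθ, hs, hcol, -⟩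
  · obtain ⟨t0, hin0, hcol0⟩ := mem_D_iff.mp hxD
    have ht0 : t0 < opF m S d0 x := inside_lt_op hin0 hcol0 ⟨s, ho⟩
    have hsx : opF m S d0 x ≤ s := op_le ho
    have hoc : outerF m S d0 t0 c0 := ⟨hin0.1, by rw [hcol0]; exact hxc0, by rw [hcol0]; exact hdxc0⟩
    have := op_le hoc
    omega
  · have hoc : outerF m S d0 s c0 := ⟨hs, by rw [hcol]; exact hxc0, by rw [hcol]; exact hdxc0⟩
    have := op_le hoc
    omega

lemma op_col_cases {c0 : Fin n} (hc0 : c0 ∉ DsetF H m S d0) (hop : hasOpF m S d0 c0) :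
    colF S d0 (opF m S d0 c0) ∈ DsetF H m S d0 ∨
    (colF S d0 (opF m S d0 c0) ∉ DsetF H m S d0 ∧
      opF m S d0 (colF S d0 (opF m S d0 c0)) < opF m S d0 c0) := by
  obtain ⟨hout, hmin⟩ := op_spec hop
  set θ := opF m S d0 c0 with hθ
  set x := colF S d0 θ with hx
  by_cases hxD : x ∈ DsetF H m S d0
  · exact Or.inl hxD
  · refine Or.inr ⟨hxD, ?_⟩
    have hni : ¬ insideF H m S d0 θ := by
      intro hin
      exact hxD (mem_D_iff.mpr ⟨θ, hin, rfl⟩)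
    unfold insideF at hni
    push_neg at hni
    have hcov : covF H m S θ (x, wvF S d0 θ) := hni hout.1 (wvF S d0 θ) (mem_cn_self _ _)
    rcases cov_cases (d0 := d0) hcov with ⟨s, hsθ, ho⟩ | ⟨s, hsθ, hs, hcol, -⟩
    · exact lt_of_le_of_lt (op_le ho) hsθ
    · exfalso
      have hoc : outerF m S d0 s c0 :=
        ⟨hs, by rw [hcol]; exact hout.2.1, by rw [hcol]; exact hout.2.2⟩
      have := op_le hoc
      omega

variable [Nonempty W]

lemma mem_A_of_op_eq (hS : IsLegal (Lex (pathPow n m) H) S) {c : Fin n}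
    (hc : c ∉ DsetF H m S d0) {θ : ℕ} (hopc : opF m S d0 c = θ)
    (hin : insideF H m S d0 θ) : c ∈ AsetF H m S d0 := by
  simp only [AsetF, Finset.mem_filter, Finset.mem_univ, true_and]
  exact ⟨nonD_evented hS hc, hopc ▸ hin⟩

/-- the main "gap" lemma: between two position-consecutive columns of `D` there are
at least `m` columns of `A`. -/
lemma A_gap (hS : IsLegal (Lex (pathPow n m) H) S) (hm : 1 ≤ m) {j j' : Fin n}
    (hj : j ∈ DsetF H m S d0) (hj' : j' ∈ DsetF H m S d0) (hlt : j.val < j'.val)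
    (hmid : ∀ c ∈ DsetF H m S d0, ¬(j.val < c.val ∧ c.val < j'.val)) :
    ∃ B : Finset (Fin n), B.card = m ∧ B ⊆ AsetF H m S d0 ∧
      ∀ b ∈ B, j.val < b.val ∧ b.val < j'.val := by
  have hgap : j.val + m + 1 ≤ j'.val := by
    have := D_sep hj hj' (fun h => absurd (congrArg Fin.val h) (by omega))
    have h2 := ndist_eq j.val j'.val
    omega
  set Γ : Finset (Fin n) := Finset.univ.filter (fun c => j.val < c.val ∧ c.val < j'.val) with hΓ
  have hΓD : ∀ c ∈ Γ, c ∉ DsetF H m S d0 := by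
    intro c hc hcD
    rw [hΓ, Finset.mem_filter] at hc
    exact hmid c hcD hc.2
  have hΓne : Γ.Nonempty := by
    refine ⟨⟨j.val + 1, by omega⟩, ?_⟩
    rw [hΓ, Finset.mem_filter]
    exact ⟨Finset.mem_univ _, by simp; omega⟩
  obtain ⟨c0, hc0Γ, hc0min⟩ := Finset.exists_min_image Γ (opF m S d0) hΓne
  have hc0D : c0 ∉ DsetF H m S d0 := hΓD c0 hc0Γ
  have hc0mem : j.val < c0.val ∧ c0.val < j'.val := by
    rw [hΓ, Finset.mem_filter] at hc0Γ; exact hc0Γ.2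
  have hop : hasOpF m S d0 c0 := (nonD_evented hS hc0D).1
  obtain ⟨hout, hmin⟩ := op_spec hop
  set θ := opF m S d0 c0 with hθ
  set x := colF S d0 θ with hxdef
  have hxc0 : x ≠ c0 := hout.2.1
  have hdxc0 : Nat.dist x.val c0.val ≤ m := hout.2.2
  have hdist := ndist_eq x.val c0.val
  rcases op_col_cases hc0D hop with hxD | ⟨hxD, hlt2⟩
  · replace hxD : x ∈ DsetF H m S d0 := hxD
    have hxjj' : x = j ∨ x = j' := by
      by_contra hne
      push_neg at hne
      rcases Nat.lt_or_ge x.val (c0.val) with hcase | hcase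
      · -- x < c0 : then x ≤ j side or middle
        by_cases hxj : j.val < x.val ∧ x.val < j'.val
        · exact hmid x hxD hxj
        · -- x ≤ j, and x ≠ j so x < j; then dist x j ≤ m contradicting D_sep
          have hxle : x.val ≤ j.val := by omega
          have hxltj : x.val < j.val := by
            rcases lt_or_eq_of_le hxle with h | h
            · exact h
            · exact absurd (Fin.ext h) hne.1
          have := D_sep hxD hj (fun h => hne.1 h)
          have h3 := ndist_eq x.val j.val
          omega
      · by_cases hxj : j.val < x.val ∧ x.val < j'.val
        · exact hmid x hxD hxj
        · have hxge : j'.val ≤ x.val := by omega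
          have hxgtj : j'.val < x.val := by
            rcases lt_or_eq_of_le hxge with h | h
            · exact h
            · exact absurd (Fin.ext h.symm) hne.2
          have := D_sep hxD hj' (fun h => hne.2 h)
          have h3 := ndist_eq x.val j'.val
          omega
    have hinθ : insideF H m S d0 θ := inside_of_op_at_D hc0D (by
        rcases hxjj' with rfl | rfl <;> assumption) hop rfl
    -- build B next to x
    rcases hxjj' with rfl | rfl
    · -- x = j : B = (j, j+m]
      have hbnd : ∀ b ∈ Finset.Ioc x.val (x.val + m), b < n := by
        intro b hb
        rw [Finset.mem_Ioc] at hb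
        have := j'.isLt
        omega
      refine ⟨(Finset.Ioc x.val (x.val + m)).attachFin hbnd, ?_, ?_, ?_⟩
      · rw [Finset.card_attachFin, Nat.card_Ioc]; omega
      · intro b hb
        rw [Finset.mem_attachFin, Finset.mem_Ioc] at hb
        have hbΓ : b ∈ Γ := by
          rw [hΓ, Finset.mem_filter]
          refine ⟨Finset.mem_univ _, ?_⟩
          omega
        have hbD : b ∉ DsetF H m S d0 := hΓD b hbΓ
        have houtb : outerF m S d0 θ b := by
          refine ⟨hout.1, ?_, ?_⟩
          · rw [← hxdef]; intro h; exact absurd (congrArg Fin.val h) (by omega)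
          · rw [← hxdef, ndist_eq]; omega
        have hople : opF m S d0 b ≤ θ := op_le houtb
        have hopge : θ ≤ opF m S d0 b := hc0min b hbΓ
        exact mem_A_of_op_eq hS hbD (le_antisymm hople hopge) hinθ
      · intro b hb
        rw [Finset.mem_attachFin, Finset.mem_Ioc] at hb
        omega
    · -- x = j' : B = [j'-m, j')
      have hbnd : ∀ b ∈ Finset.Ico (x.val - m) x.val, b < n := by
        intro b hb
        rw [Finset.mem_Ico] at hb
        have := x.isLt
        omega
      refine ⟨(Finset.Ico (x.val - m) x.val).attachFin hbnd, ?_, ?_, ?_⟩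
      · rw [Finset.card_attachFin, Nat.card_Ico]; omega
      · intro b hb
        rw [Finset.mem_attachFin, Finset.mem_Ico] at hb
        have hbΓ : b ∈ Γ := by
          rw [hΓ, Finset.mem_filter]
          refine ⟨Finset.mem_univ _, ?_⟩
          omega
        have hbD : b ∉ DsetF H m S d0 := hΓD b hbΓ
        have houtb : outerF m S d0 θ b := by
          refine ⟨hout.1, ?_, ?_⟩
          · rw [← hxdef]; intro h; exact absurd (congrArg Fin.val h) (by omega)
          · rw [← hxdef, ndist_eq]; omega
        have hople : opF m S d0 b ≤ θ := op_le houtb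
        have hopge : θ ≤ opF m S d0 b := hc0min b hbΓ
        exact mem_A_of_op_eq hS hbD (le_antisymm hople hopge) hinθ
      · intro b hb
        rw [Finset.mem_attachFin, Finset.mem_Ico] at hb
        omega
  · replace hxD : x ∉ DsetF H m S d0 := hxD
    replace hlt2 : opF m S d0 x < θ := hlt2
    exfalso
    by_cases hxΓ : x ∈ Γ
    · have := hc0min x hxΓ
      omega
    · -- x outside (j, j'), x ∉ D so x ≠ j, j'
      have hxj : x ≠ j := fun h => hxD (h ▸ hj)
      have hxj' : x ≠ j' := fun h => hxD (h ▸ hj')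
      have hxout : x.val ≤ j.val ∨ j'.val ≤ x.val := by
        by_contra hcon
        push_neg at hcon
        exact hxΓ (by rw [hΓ, Finset.mem_filter]; exact ⟨Finset.mem_univ _, by omega⟩)
      rcases hxout with hcase | hcase
      · -- x < j
        have hxltj : x.val < j.val := by
          rcases lt_or_eq_of_le hcase with h | h
          · exact h
          · exact absurd (Fin.ext h) hxj
        -- pick θ is outer for j
        have houtj : outerF m S d0 θ j := by
          refine ⟨hout.1, by rw [← hxdef]; exact hxj, ?_⟩
          rw [← hxdef, ndist_eq]
          omega
        obtain ⟨t0, hin0, hcol0⟩ := mem_D_iff.mp hj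
        have ht0 : t0 < opF m S d0 j := inside_lt_op hin0 hcol0 ⟨θ, houtj⟩
        have hople : opF m S d0 j ≤ θ := op_le houtj
        have houtc0 : outerF m S d0 t0 c0 := by
          refine ⟨hin0.1, ?_, ?_⟩
          · rw [hcol0]; intro h; exact absurd (congrArg Fin.val h) (by omega)
          · rw [hcol0, ndist_eq]; omega
        have := op_le houtc0
        omega
      · have hxgtj' : j'.val < x.val := by
          rcases lt_or_eq_of_le hcase with h | h
          · exact h
          · exact absurd (Fin.ext h.symm) hxj'
        have houtj : outerF m S d0 θ j' := by
          refine ⟨hout.1, by rw [← hxdef]; exact hxj', ?_⟩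
          rw [← hxdef, ndist_eq]
          omega
        obtain ⟨t0, hin0, hcol0⟩ := mem_D_iff.mp hj'
        have ht0 : t0 < opF m S d0 j' := inside_lt_op hin0 hcol0 ⟨θ, houtj⟩
        have hople : opF m S d0 j' ≤ θ := op_le houtj
        have houtc0 : outerF m S d0 t0 c0 := by
          refine ⟨hin0.1, ?_, ?_⟩
          · rw [hcol0]; intro h; exact absurd (congrArg Fin.val h) (by omega)
          · rw [hcol0, ndist_eq]; omega
        have := op_le houtc0
        omega

/-- |A| ≥ m -/
lemma A_card_ge_m (hS : IsLegal (Lex (pathPow n m) H) S) (hm : 1 ≤ m) (hn : m + 2 ≤ n) :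
    m ≤ (AsetF H m S d0).card := by
  have hn0 : 0 < n := by omega
  obtain ⟨j0, hj0⟩ := D_nonempty (d0 := d0) hS hn0
  set Γ : Finset (Fin n) := Finset.univ.filter (fun c => c ∉ DsetF H m S d0) with hΓ
  have hΓne : Γ.Nonempty := by
    by_cases hcase : j0.val + 1 < n
    · refine ⟨⟨j0.val + 1, hcase⟩, ?_⟩
      rw [hΓ, Finset.mem_filter]
      refine ⟨Finset.mem_univ _, fun hD => ?_⟩
      have := D_sep hj0 hD (fun h => absurd (congrArg Fin.val h) (by simp))
      rw [ndist_eq] at this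
      simp at this
      omega
    · refine ⟨⟨j0.val - 1, by omega⟩, ?_⟩
      rw [hΓ, Finset.mem_filter]
      refine ⟨Finset.mem_univ _, fun hD => ?_⟩
      have hj0v : 0 < j0.val := by
        have := j0.isLt
        omega
      have := D_sep hj0 hD (fun h => absurd (congrArg Fin.val h) (by simp; omega))
      rw [ndist_eq] at this
      simp at this
      omega
  obtain ⟨c0, hc0Γ, hc0min⟩ := Finset.exists_min_image Γ (opF m S d0) hΓne
  have hc0D : c0 ∉ DsetF H m S d0 := by
    rw [hΓ, Finset.mem_filter] at hc0Γ; exact hc0Γ.2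
  have hop : hasOpF m S d0 c0 := (nonD_evented hS hc0D).1
  obtain ⟨hout, hmin⟩ := op_spec hop
  set θ := opF m S d0 c0 with hθ
  set x := colF S d0 θ with hxdef
  rcases op_col_cases hc0D hop with hxD | ⟨hxD, hlt2⟩
  · replace hxD : x ∈ DsetF H m S d0 := hxD
    have hinθ : insideF H m S d0 θ := inside_of_op_at_D hc0D hxD hop rfl
    have hbnd : ∀ b ∈ (Finset.Ico (x.val - m) (min (x.val + m + 1) n)).erase x.val, b < n := by
      intro b hb
      rw [Finset.mem_erase, Finset.mem_Ico] at hb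
      omega
    have hsub : ((Finset.Ico (x.val - m) (min (x.val + m + 1) n)).erase x.val).attachFin hbnd ⊆
        AsetF H m S d0 := by
      intro b hb
      rw [Finset.mem_attachFin, Finset.mem_erase, Finset.mem_Ico] at hb
      have hbne : x ≠ b := fun h => hb.1 (congrArg Fin.val h.symm)
      have hbD : b ∉ DsetF H m S d0 := by
        intro hD
        have := D_sep hxD hD hbne
        rw [ndist_eq] at this
        omega
      have houtb : outerF m S d0 θ b := by
        refine ⟨hout.1, by rw [← hxdef]; exact hbne, ?_⟩
        rw [← hxdef, ndist_eq]
        omega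
      have hbΓ : b ∈ Γ := by
        rw [hΓ, Finset.mem_filter]
        exact ⟨Finset.mem_univ _, hbD⟩
      have hople : opF m S d0 b ≤ θ := op_le houtb
      have hopge : θ ≤ opF m S d0 b := hc0min b hbΓ
      exact mem_A_of_op_eq hS hbD (le_antisymm hople hopge) hinθ
    refine le_trans ?_ (Finset.card_le_card hsub)
    rw [Finset.card_attachFin, Finset.card_erase_of_mem, Nat.card_Ico]
    · have := x.isLt
      omega
    · rw [Finset.mem_Ico]
      have := x.isLt
      omega
  · exfalso
    replace hxD : x ∉ DsetF H m S d0 := hxD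
    replace hlt2 : opF m S d0 x < θ := hlt2
    have hxΓ : x ∈ Γ := by
      rw [hΓ, Finset.mem_filter]
      exact ⟨Finset.mem_univ _, hxD⟩
    have := hc0min x hxΓ
    omega

end Upper2
end GrundyDom
namespace GrundyDom
section Upper3
open scoped Classical
variable {n : ℕ} {W : Type*} [Fintype W] [Nonempty W] {H : SimpleGraph W} {m : ℕ}
  {S : List (Fin n × W)} {d0 : Fin n × W}

/-- The number of inside picks in column `j`, plus one if the inside picks do not
dominate the column, is at most `γ_gr H`. -/
lemma inside_count (hS : IsLegal (Lex (pathPow n m) H) S) (j : Fin n) :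
    (((Finset.range S.length).filter
        (fun t => insideF H m S d0 t ∧ colF S d0 t = j)).card ≤ gammaGr H) ∧
    ((∃ x : W, ∀ t, t < S.length → insideF H m S d0 t → colF S d0 t = j →
        x ∉ cn H (wvF S d0 t)) →
      ((Finset.range S.length).filter
        (fun t => insideF H m S d0 t ∧ colF S d0 t = j)).card + 1 ≤ gammaGr H) := by
  set Fj := (Finset.range S.length).filter
      (fun t => insideF H m S d0 t ∧ colF S d0 t = j) with hFj
  set e : Fin Fj.card → ℕ := fun i => ((Fj.orderIsoOfFin rfl) i).val with he
  have hemem : ∀ i, e i ∈ Fj := fun i => ((Fj.orderIsoOfFin rfl) i).2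
  have hespec : ∀ i, e i < S.length ∧ insideF H m S d0 (e i) ∧ colF S d0 (e i) = j := by
    intro i
    have := hemem i
    rw [hFj, Finset.mem_filter, Finset.mem_range] at this
    exact ⟨this.1, this.2.1, this.2.2⟩
  have hmono : StrictMono e := by
    intro a b hab
    have : (Fj.orderIsoOfFin rfl) a < (Fj.orderIsoOfFin rfl) b := by
      rw [OrderIso.lt_iff_lt]
      exact hab
    exact this
  set lj : List W := List.ofFn (fun i => wvF S d0 (e i)) with hlj
  have hlen : lj.length = Fj.card := by rw [hlj, List.length_ofFn]
  have hget : ∀ (i : ℕ) (h : i < lj.length), lj.get ⟨i, h⟩ = wvF S d0 (e ⟨i, hlen ▸ h⟩) := by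
    intro i h
    rw [List.get_eq_getElem]
    exact List.getElem_ofFn _
  have hpre : Pre H lj := by
    rw [pre_iff_indexed]
    constructor
    · rw [hlj, List.nodup_ofFn]
      intro a b hab
      have hab' : wvF S d0 (e a) = wvF S d0 (e b) := hab
      have ha := hespec a
      have hb := hespec b
      have : S.get ⟨e a, ha.1⟩ = S.get ⟨e b, hb.1⟩ := by
        rw [get_eq_pk (d0 := d0), get_eq_pk (d0 := d0), ha.2.2, hb.2.2, hab']
      have := (List.Nodup.get_inj_iff hS.nodup).mp this
      have : e a = e b := congrArg Fin.val this
      exact hmono.injective this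
    · intro i h
      rw [hget i h]
      obtain ⟨hei, ⟨-, x, hx, hncov⟩, hcol⟩ := hespec ⟨i, hlen ▸ h⟩
      refine ⟨x, hx, ?_⟩
      intro s hs hsi hmem
      rw [hget s hs] at hmem
      set is : Fin Fj.card := ⟨s, hlen ▸ hs⟩ with his
      obtain ⟨hes, hins, hcols⟩ := hespec is
      have hlt : e is < e ⟨i, hlen ▸ h⟩ := hmono (by simp [his]; omega)
      have : covF H m S (e ⟨i, hlen ▸ h⟩) (colF S d0 (e is), x) :=
        cov_of_inside_col hes hmem hlt
      rw [hcols, ← hcol] at this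
      exact hncov this
  constructor
  · have := le_gammaGr_of_pre H hpre
    rwa [hlen] at this
  · rintro ⟨x0, hx0⟩
    have hnd : cnUnion H lj ≠ Set.univ := by
      intro hU
      have : x0 ∈ cnUnion H lj := hU ▸ trivial
      rw [mem_cnUnion] at this
      obtain ⟨v, hv, hx⟩ := this
      rw [hlj, List.mem_ofFn] at hv
      obtain ⟨i, rfl⟩ := hv
      obtain ⟨hei, hin, hcol⟩ := hespec i
      exact hx0 (e i) hei hin hcol hx
    have := lt_gammaGr_of_pre_not_dom H hpre hnd
    omega

omit [Fintype W] [Nonempty W] in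
lemma Dcol_of_inside {t : ℕ} (hin : insideF H m S d0 t) : colF S d0 t ∈ DsetF H m S d0 :=
  mem_D_iff.mpr ⟨t, hin, rfl⟩

lemma notUncov_notEvented (hS : IsLegal (Lex (pathPow n m) H) S) {j : Fin n}
    (h : ¬ (∃ x : W, ∀ t, t < S.length → insideF H m S d0 t → colF S d0 t = j →
        x ∉ cn H (wvF S d0 t))) : ¬ eventedF H m S d0 j := by
  push_neg at h
  rintro ⟨hop, x, hncov⟩
  obtain ⟨t, ht, hin, hcol, hx⟩ := h x
  have hlt : t < opF m S d0 j := inside_lt_op hin hcol hop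
  have hcv : covF H m S (opF m S d0 j) (colF S d0 t, x) := cov_of_inside_col ht hx hlt
  rw [hcol] at hcv
  exact hncov hcv

/-- master counting inequality -/
lemma count_master (hS : IsLegal (Lex (pathPow n m) H) S) (hn0 : 0 < n) :
    S.length + (DsetF H m S d0).card + (AsetF H m S d0).card ≤
      gammaGr H * (DsetF H m S d0).card + n := by
  classical
  set k := gammaGr H
  set D := DsetF H m S d0 with hD
  set A := AsetF H m S d0 with hA
  set Z := ZsetF H m S d0 with hZ
  set inIdx := (Finset.range S.length).filter (fun t => insideF H m S d0 t) with hinIdx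
  set puIdx := (Finset.range S.length).filter (fun t => ¬ insideF H m S d0 t) with hpuIdx
  have hsplit : inIdx.card + puIdx.card = S.length := by
    rw [hinIdx, hpuIdx, Finset.card_filter_add_card_filter_not, Finset.card_range]
  -- fiber the inside picks over columns
  have hfiber : inIdx.card = ∑ j ∈ Finset.univ (α := Fin n),
      (inIdx.filter (fun t => colF S d0 t = j)).card :=
    Finset.card_eq_sum_card_fiberwise (fun t _ => Finset.mem_univ _)
  have hfil : ∀ j : Fin n, inIdx.filter (fun t => colF S d0 t = j) =
      (Finset.range S.length).filter (fun t => insideF H m S d0 t ∧ colF S d0 t = j) := by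
    intro j
    rw [hinIdx, Finset.filter_filter]
  set c : Fin n → ℕ := fun j =>
    ((Finset.range S.length).filter (fun t => insideF H m S d0 t ∧ colF S d0 t = j)).card with hc
  have hfiber2 : inIdx.card = ∑ j ∈ Finset.univ (α := Fin n), c j := by
    rw [hfiber]
    exact Finset.sum_congr rfl (fun j _ => by rw [hfil j])
  have hczero : ∀ j, j ∉ D → c j = 0 := by
    intro j hj
    rw [hc, Finset.card_eq_zero, Finset.filter_eq_empty_iff]
    rintro t ht ⟨hin, hcol⟩
    exact hj (hcol ▸ Dcol_of_inside hin)
  have hsumD : inIdx.card = ∑ j ∈ D, c j := by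
    rw [hfiber2]
    exact (Finset.sum_subset (Finset.subset_univ D) (fun j _ hj => hczero j hj)).symm
  set Unc : Fin n → Prop := fun j => ∃ x : W, ∀ t, t < S.length → insideF H m S d0 t →
      colF S d0 t = j → x ∉ cn H (wvF S d0 t) with hUnc
  set D1 := D.filter Unc with hD1
  have hD1sub : D1 ⊆ D := Finset.filter_subset _ _
  -- bound on the inside sum
  have hsum_bound : inIdx.card + D1.card ≤ k * D.card := by
    rw [hsumD]
    have : ∑ j ∈ D, c j + D1.card = ∑ j ∈ D1, (c j + 1) + ∑ j ∈ D \ D1, c j := by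
      rw [Finset.sum_add_distrib, Finset.sum_const, smul_eq_mul, mul_one]
      have := Finset.sum_filter_add_sum_filter_not D Unc c
      rw [← hD1] at this
      have hsdiff : D.filter (fun j => ¬ Unc j) = D \ D1 := by
        rw [hD1, Finset.sdiff_eq_filter]
        refine Finset.filter_congr (fun j hj => ?_)
        simp [Finset.mem_filter, hj]
      rw [hsdiff] at this
      omega
    rw [this]
    have h1 : ∑ j ∈ D1, (c j + 1) ≤ D1.card * k := by
      calc ∑ j ∈ D1, (c j + 1) ≤ ∑ _j ∈ D1, k := by
            refine Finset.sum_le_sum (fun j hj => ?_)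
            rw [hD1, Finset.mem_filter] at hj
            exact (inside_count hS j).2 hj.2
        _ = D1.card * k := by rw [Finset.sum_const, smul_eq_mul]
    have h2 : ∑ j ∈ D \ D1, c j ≤ (D \ D1).card * k := by
      calc ∑ j ∈ D \ D1, c j ≤ ∑ _j ∈ D \ D1, k :=
            Finset.sum_le_sum (fun j _ => (inside_count hS j).1)
        _ = (D \ D1).card * k := by rw [Finset.sum_const, smul_eq_mul]
    have hcards : D1.card + (D \ D1).card = D.card := by
      have := Finset.card_sdiff_add_card_eq_card hD1sub
      omega
    calc ∑ j ∈ D1, (c j + 1) + ∑ j ∈ D \ D1, c j ≤ D1.card * k + (D \ D1).card * k := by omega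
      _ = D.card * k := by rw [← add_mul, hcards]
      _ = k * D.card := mul_comm _ _
  -- D \ D1 ⊆ Z
  have hD2Z : D \ D1 ⊆ Z := by
    intro j hj
    rw [Finset.mem_sdiff, hD1, Finset.mem_filter] at hj
    have hnu : ¬ Unc j := fun h => hj.2 ⟨hj.1, h⟩
    rw [hZ, ZsetF, Finset.mem_filter]
    exact ⟨Finset.mem_univ _, notUncov_notEvented hS hnu⟩
  have hZcard : D.card ≤ Z.card + D1.card := by
    have h1 := Finset.card_le_card hD2Z
    have h2 := Finset.card_sdiff_add_card_eq_card hD1sub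
    omega
  -- pure picks inject into columns outside A ∪ Z
  have hAZdisj : Disjoint A Z := by
    rw [Finset.disjoint_left]
    intro j hjA hjZ
    rw [hA, AsetF, Finset.mem_filter] at hjA
    rw [hZ, ZsetF, Finset.mem_filter] at hjZ
    exact hjZ.2 hjA.2.1
  set ψ : ℕ → Fin n := fun t =>
    if h : t < S.length ∧ ¬ insideF H m S d0 t then Classical.choose (pure_priv hS h.1 h.2)
    else ⟨0, hn0⟩ with hψ
  have hψspec : ∀ t, t < S.length → ¬ insideF H m S d0 t →
      outerF m S d0 t (ψ t) ∧ ∃ x, ¬ covF H m S t (ψ t, x) := by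
    intro t ht hni
    have hval : ψ t = Classical.choose (pure_priv hS ht hni) := by
      show dite _ _ _ = _
      rw [dif_pos (⟨ht, hni⟩ : t < S.length ∧ ¬ insideF H m S d0 t)]
    rw [hval]
    exact Classical.choose_spec (pure_priv hS ht hni)
  have hψop : ∀ t, t < S.length → ¬ insideF H m S d0 t → opF m S d0 (ψ t) = t := by
    intro t ht hni
    obtain ⟨ho, x, hx⟩ := hψspec t ht hni
    exact op_eq_of_footprint ho hx
  have hpu_card : puIdx.card ≤ n - (A.card + Z.card) := by
    have hmaps : ∀ t ∈ puIdx, ψ t ∈ Finset.univ \ (A ∪ Z) := by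
      intro t ht
      rw [hpuIdx, Finset.mem_filter, Finset.mem_range] at ht
      obtain ⟨ho, x, hx⟩ := hψspec t ht.1 ht.2
      have hopt := hψop t ht.1 ht.2
      have hev : eventedF H m S d0 (ψ t) := ⟨⟨t, ho⟩, by rw [hopt]; exact ⟨x, hx⟩⟩
      rw [Finset.mem_sdiff, Finset.mem_union]
      refine ⟨Finset.mem_univ _, ?_⟩
      rintro (hA' | hZ')
      · rw [hA, AsetF, Finset.mem_filter] at hA'
        have := hA'.2.2
        rw [hopt] at this
        exact ht.2 this
      · rw [hZ, ZsetF, Finset.mem_filter] at hZ'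
        exact hZ'.2 hev
    have hinj : Set.InjOn ψ puIdx := by
      intro t ht t' ht' hee
      rw [Finset.coe_filter] at ht ht'
      simp only [Set.mem_setOf_eq, Finset.mem_range] at ht ht'
      have h1 := hψop t ht.1 ht.2
      have h2 := hψop t' ht'.1 ht'.2
      rw [hee] at h1
      omega
    have := Finset.card_le_card_of_injOn ψ hmaps hinj
    rw [Finset.card_sdiff_of_subset (Finset.subset_univ _), Finset.card_union_of_disjoint hAZdisj,
      Finset.card_univ, Fintype.card_fin] at this
    exact this
  have hAZn : A.card + Z.card ≤ n := by
    have := Finset.card_le_card (Finset.subset_univ (A ∪ Z))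
    rw [Finset.card_union_of_disjoint hAZdisj, Finset.card_univ, Fintype.card_fin] at this
    exact this
  omega

end Upper3
end GrundyDom
namespace GrundyDom
section Upper4
open scoped Classical
variable {n : ℕ} {W : Type*} [Fintype W] [Nonempty W] {H : SimpleGraph W} {m : ℕ}
  {S : List (Fin n × W)} {d0 : Fin n × W}

omit [Fintype W] [Nonempty W] in
lemma D_card_bound (hn0 : 0 < n) : (DsetF H m S d0).card * (m + 1) ≤ n + m := by
  set D := DsetF H m S d0 with hD
  set d := D.card with hd
  rcases Nat.eq_zero_or_pos d with h0 | hpos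
  · rw [h0]; omega
  set e := D.orderIsoOfFin hd.symm with he
  have hstep : ∀ i : ℕ, ∀ h : i + 1 < d,
      ((e ⟨i, by omega⟩ : D) : Fin n).val + (m + 1) ≤ ((e ⟨i + 1, h⟩ : D) : Fin n).val := by
    intro i h
    have hlt : (e ⟨i, by omega⟩ : D) < e ⟨i + 1, h⟩ := by
      rw [OrderIso.lt_iff_lt]
      exact Fin.mk_lt_mk.mpr (by omega)
    have hlt' : ((e ⟨i, by omega⟩ : D) : Fin n).val < ((e ⟨i + 1, h⟩ : D) : Fin n).val := hlt
    have hne : ((e ⟨i, by omega⟩ : D) : Fin n) ≠ ((e ⟨i + 1, h⟩ : D) : Fin n) := by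
      intro hcon
      omega
    have hsep := D_sep (e ⟨i, by omega⟩ : D).2 (e ⟨i + 1, h⟩ : D).2 hne
    rw [ndist_eq] at hsep
    omega
  have haux : ∀ i : ℕ, ∀ h : i < d, i * (m + 1) ≤ ((e ⟨i, h⟩ : D) : Fin n).val := by
    intro i
    induction i with
    | zero => intro h; omega
    | succ i ih =>
      intro h
      have h1 := ih (by omega)
      have h2 := hstep i h
      have : (i + 1) * (m + 1) = i * (m + 1) + (m + 1) := by ring
      omega
  have hlast := haux (d - 1) (by omega)
  have hbnd := ((e ⟨d - 1, by omega⟩ : D) : Fin n).isLt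
  have : (d - 1) * (m + 1) + (m + 1) = d * (m + 1) := by
    have : d - 1 + 1 = d := by omega
    calc (d - 1) * (m + 1) + (m + 1) = (d - 1 + 1) * (m + 1) := by ring
      _ = d * (m + 1) := by rw [this]
  omega

lemma A_card_bound (hS : IsLegal (Lex (pathPow n m) H) S) (hm : 1 ≤ m) :
    ((DsetF H m S d0).card - 1) * m ≤ (AsetF H m S d0).card := by
  set D := DsetF H m S d0 with hD
  set A := AsetF H m S d0 with hA
  set d := D.card with hd
  rcases Nat.lt_or_ge d 2 with h0 | h2
  · have : d - 1 = 0 := by omega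
    rw [this]; omega
  set e := D.orderIsoOfFin hd.symm with he
  have hemono : ∀ (a b : Fin d), a ≤ b → ((e a : D) : Fin n).val ≤ ((e b : D) : Fin n).val := by
    intro a b hab
    have : (e a : D) ≤ (e b : D) := by rw [OrderIso.le_iff_le]; exact hab
    exact this
  have key : ∀ i : ℕ, ∀ h : i + 1 < d, ∃ B : Finset (Fin n), B.card = m ∧ B ⊆ A ∧
      ∀ b ∈ B, ((e ⟨i, by omega⟩ : D) : Fin n).val < b.val ∧
        b.val < ((e ⟨i + 1, h⟩ : D) : Fin n).val := by
    intro i h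
    have hlt : ((e ⟨i, by omega⟩ : D) : Fin n).val < ((e ⟨i + 1, h⟩ : D) : Fin n).val := by
      have : (e ⟨i, by omega⟩ : D) < e ⟨i + 1, h⟩ := by
        rw [OrderIso.lt_iff_lt]; exact Fin.mk_lt_mk.mpr (by omega)
      exact this
    refine A_gap hS hm (e ⟨i, by omega⟩ : D).2 (e ⟨i + 1, h⟩ : D).2 hlt ?_
    intro cc hcc hbet
    set ic := e.symm ⟨cc, hcc⟩ with hic
    have hcc' : ((e ic : D) : Fin n) = cc := by rw [hic, OrderIso.apply_symm_apply]
    have hl1 : (⟨i, by omega⟩ : Fin d) < ic := by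
      rw [← OrderIso.lt_iff_lt e, ← Subtype.coe_lt_coe, hcc']
      exact Fin.lt_def.mpr hbet.1
    have hl2 : ic < (⟨i + 1, h⟩ : Fin d) := by
      rw [← OrderIso.lt_iff_lt e, ← Subtype.coe_lt_coe, hcc']
      exact Fin.lt_def.mpr hbet.2
    have hg1 : i < ic.val := hl1
    have hg2 : ic.val < i + 1 := hl2
    omega
  set B' : ℕ → Finset (Fin n) := fun i =>
    if h : i + 1 < d then Classical.choose (key i h) else ∅ with hB'
  have hB'spec : ∀ i : ℕ, ∀ h : i + 1 < d, (B' i).card = m ∧ B' i ⊆ A ∧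
      ∀ b ∈ B' i, ((e ⟨i, by omega⟩ : D) : Fin n).val < b.val ∧
        b.val < ((e ⟨i + 1, h⟩ : D) : Fin n).val := by
    intro i h
    have : B' i = Classical.choose (key i h) := by
      show dite _ _ _ = _
      rw [dif_pos h]
    rw [this]
    exact Classical.choose_spec (key i h)
  have hdisj : ∀ i ∈ Finset.range (d - 1), ∀ j ∈ Finset.range (d - 1), i ≠ j →
      Disjoint (B' i) (B' j) := by
    have hhalf : ∀ i j : ℕ, i ∈ Finset.range (d - 1) → j ∈ Finset.range (d - 1) → i < j →
        Disjoint (B' i) (B' j) := by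
      intro i j hi hj hij
      rw [Finset.mem_range] at hi hj
      rw [Finset.disjoint_left]
      intro b hbi hbj
      have s1 := (hB'spec i (by omega)).2.2 b hbi
      have s2 := (hB'spec j (by omega)).2.2 b hbj
      have hle : ((e ⟨i + 1, by omega⟩ : D) : Fin n).val ≤ ((e ⟨j, by omega⟩ : D) : Fin n).val :=
        hemono _ _ (by rw [Fin.mk_le_mk]; omega)
      omega
    intro i hi j hj hij
    rcases Nat.lt_or_ge i j with h | h
    · exact hhalf i j hi hj h
    · exact (hhalf j i hj hi (by omega)).symm
  have hsub : (Finset.range (d - 1)).biUnion B' ⊆ A := by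
    intro b hb
    rw [Finset.mem_biUnion] at hb
    obtain ⟨i, hi, hbi⟩ := hb
    rw [Finset.mem_range] at hi
    exact (hB'spec i (by omega)).2.1 hbi
  have hcard : ((Finset.range (d - 1)).biUnion B').card = (d - 1) * m := by
    rw [Finset.card_biUnion hdisj]
    have : ∀ i ∈ Finset.range (d - 1), (B' i).card = m := by
      intro i hi
      rw [Finset.mem_range] at hi
      exact (hB'spec i (by omega)).1
    rw [Finset.sum_congr rfl this, Finset.sum_const, smul_eq_mul, Finset.card_range]
  calc (d - 1) * m = ((Finset.range (d - 1)).biUnion B').card := hcard.symm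
    _ ≤ A.card := Finset.card_le_card hsub

lemma gammaGr_H_pos : 1 ≤ gammaGr H := by
  have hpre : Pre H ([] : List W) := ⟨List.nodup_nil, fun i => absurd i.isLt (by simp)⟩
  have hne : cnUnion H ([] : List W) ≠ Set.univ := by
    intro h
    have : (Classical.arbitrary W) ∈ cnUnion H ([] : List W) := h ▸ trivial
    rw [mem_cnUnion] at this
    obtain ⟨v, hv, -⟩ := this
    simp at hv
  have := lt_gammaGr_of_pre_not_dom H hpre hne
  exact (by simpa using this : 0 < gammaGr H)

/-- upper bound, case `γ_gr(H) ≥ m+1` -/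
lemma upper_caseA (hm : 1 ≤ m) (hn : m + 2 ≤ n) (hk : m + 1 ≤ gammaGr H) :
    gammaGr (Lex (pathPow n m) H) ≤ ((n + m) / (m + 1)) * (gammaGr H - (m + 1)) + n + m := by
  classical
  obtain ⟨S, hS, hlen⟩ := gammaGr_spec (Lex (pathPow n m) H)
  have hn0 : 0 < n := by omega
  set d0 : Fin n × W := (⟨0, hn0⟩, Classical.arbitrary W) with hd0
  set k := gammaGr H with hkk
  set d := (DsetF H m S d0).card with hd
  set a := (AsetF H m S d0).card with ha
  set q := (n + m) / (m + 1) with hq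
  have hmaster : S.length + d + a ≤ k * d + n := count_master hS hn0
  have hd1 : 1 ≤ d := Finset.card_pos.mpr (D_nonempty hS hn0)
  have hdsep : d * (m + 1) ≤ n + m := D_card_bound hn0
  have hdq : d ≤ q := by
    rw [hq]
    exact Nat.le_div_iff_mul_le (by omega) |>.mpr hdsep
  have haA : (d - 1) * m ≤ a := A_card_bound hS hm
  have hq1 : 1 ≤ q := by
    rw [hq]
    exact Nat.one_le_div_iff (by omega) |>.mpr (by omega)
  -- len ≤ (k - (m+1)) * d + n + m ≤ (k-(m+1)) * q + n + m
  have e1 : k * d = (k - (m + 1)) * d + (m + 1) * d := by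
    have : k = (k - (m + 1)) + (m + 1) := by omega
    calc k * d = ((k - (m + 1)) + (m + 1)) * d := by rw [← this]
      _ = (k - (m + 1)) * d + (m + 1) * d := by ring
  have e2 : (m + 1) * d = m * d + d := by ring
  have e3 : (d - 1) * m + m = m * d := by
    have : d - 1 + 1 = d := by omega
    calc (d - 1) * m + m = (d - 1 + 1) * m := by ring
      _ = m * d := by rw [this]; ring
  have e4 : (k - (m + 1)) * d ≤ (k - (m + 1)) * q := Nat.mul_le_mul_left _ hdq
  have e5 : (k - (m + 1)) * q = q * (k - (m + 1)) := mul_comm _ _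
  rw [← hlen]
  omega

/-- upper bound, case `γ_gr(H) ≤ m` -/
lemma upper_caseB (hm : 1 ≤ m) (hn : m + 2 ≤ n) (hk : gammaGr H ≤ m) :
    gammaGr (Lex (pathPow n m) H) + m + 2 ≤ 2 * gammaGr H + n := by
  classical
  obtain ⟨S, hS, hlen⟩ := gammaGr_spec (Lex (pathPow n m) H)
  have hn0 : 0 < n := by omega
  set d0 : Fin n × W := (⟨0, hn0⟩, Classical.arbitrary W) with hd0
  set k := gammaGr H with hkk
  set d := (DsetF H m S d0).card with hd
  set a := (AsetF H m S d0).card with ha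
  have hmaster : S.length + d + a ≤ k * d + n := count_master hS hn0
  have hd1 : 1 ≤ d := Finset.card_pos.mpr (D_nonempty hS hn0)
  have haA : (d - 1) * m ≤ a := A_card_bound hS hm
  have ham : m ≤ a := A_card_ge_m hS hm hn
  have hk1 : 1 ≤ k := gammaGr_H_pos
  rw [← hlen]
  rcases Nat.lt_or_ge d 2 with hd2 | hd2
  · -- d = 1
    have : d = 1 := by omega
    rw [this] at hmaster
    omega
  · have f1 : k * d = k * (d - 2) + 2 * k := by
      have : d - 2 + 2 = d := by omega
      calc k * d = k * (d - 2 + 2) := by rw [this]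
        _ = k * (d - 2) + 2 * k := by ring
    have f2 : (d - 1) * m = (d - 2) * m + m := by
      have : d - 2 + 1 = d - 1 := by omega
      calc (d - 1) * m = (d - 2 + 1) * m := by rw [this]
        _ = (d - 2) * m + m := by ring
    have f3 : k * (d - 2) ≤ m * (d - 2) := Nat.mul_le_mul_right _ hk
    have f4 : (d - 2) * m = m * (d - 2) := mul_comm _ _
    omega

end Upper4
end GrundyDom
namespace GrundyDom
section Lower
open scoped Classical
variable {W : Type*} [Fintype W] [Nonempty W] {H : SimpleGraph W}

/-- lower bound `2k + n - m - 2 ≤ γ_gr(P_n^m ∘ H)` -/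
lemma lowerB {n m : ℕ} (hm : 1 ≤ m) (hn : m + 2 ≤ n) :
    2 * gammaGr H + n - m - 2 ≤ gammaGr (Lex (pathPow n m) H) := by
  classical
  have hn0 : 0 < n := by omega
  obtain ⟨SH, hSH, hSHlen⟩ := gammaGr_spec H
  set k := gammaGr H with hk
  have hk1 : 1 ≤ k := gammaGr_H_pos
  set f : ℕ → Fin n := fun i => ⟨i % n, Nat.mod_lt i hn0⟩ with hf
  have fval : ∀ i, i < n → (f i).val = i := fun i h => Nat.mod_eq_of_lt h
  have hfinj : ∀ a b, a < n → b < n → f a = f b → a = b := by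
    intro a b ha hb he
    have := congrArg Fin.val he
    rwa [fval a ha, fval b hb] at this
  set sh : ℕ → W := fun s => SH.getD s (Classical.arbitrary W) with hshdef
  have hsh : ∀ s (h : s < SH.length), sh s = SH.get ⟨s, h⟩ := by
    intro s h
    rw [hshdef]
    simp only []
    rw [List.getD_eq_getElem SH _ h]
    rfl
  have hndSH : ∀ s s', s < k → s' < k → sh s = sh s' → s = s' := by
    intro s s' h h' he
    rw [hsh s (by omega), hsh s' (by omega)] at he
    have := (List.Nodup.get_inj_iff hSH.nodup).mp he
    exact congrArg Fin.val this
  have hlegSH : ∀ i, i < k → ∃ x, x ∈ cn H (sh i) ∧ ∀ s, s < i → x ∉ cn H (sh s) := by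
    intro i hi
    obtain ⟨-, hleg⟩ := (pre_iff_indexed H).mp hSH.pre
    obtain ⟨x, hx1, hx2⟩ := hleg i (by omega)
    refine ⟨x, by rw [hsh i (by omega)]; exact hx1, fun s hs => ?_⟩
    rw [hsh s (by omega)]
    exact hx2 s (by omega) hs
  have hdomSH : ∀ x : W, ∃ s, s < k ∧ x ∈ cn H (sh s) := by
    intro x
    obtain ⟨u, hu, hx⟩ := hSH.dominates x
    obtain ⟨s, hs, rfl⟩ := List.mem_iff_get.mp hu
    refine ⟨s.val, by omega, ?_⟩
    rw [hsh s.val s.isLt]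
    convert hx
  set wl : W := sh 0 with hwl
  set L2 : ℕ := n - m - 2 with hL2
  set N : ℕ := k + L2 + (k - 1) + 1 with hN
  set g : ℕ → Fin n × W := fun t =>
    if t < k then (f 0, sh t)
    else if t < k + L2 then (f (t - k + 1), wl)
    else if t < k + L2 + (k - 1) then (f (n - 1), sh (t - (k + L2)))
    else (f (n - 2), wl) with hg
  have hg1 : ∀ t, t < k → g t = (f 0, sh t) := by
    intro t ht
    rw [hg]
    simp only [if_pos ht]
  have hg2 : ∀ t, k ≤ t → t < k + L2 → g t = (f (t - k + 1), wl) := by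
    intro t h1 h2
    rw [hg]
    simp only [if_neg (by omega : ¬ t < k), if_pos h2]
  have hg3 : ∀ t, k + L2 ≤ t → t < k + L2 + (k - 1) →
      g t = (f (n - 1), sh (t - (k + L2))) := by
    intro t h1 h2
    rw [hg]
    simp only [if_neg (by omega : ¬ t < k), if_neg (by omega : ¬ t < k + L2), if_pos h2]
  have hg4 : ∀ t, k + L2 + (k - 1) ≤ t → g t = (f (n - 2), wl) := by
    intro t h1
    rw [hg]
    simp only [if_neg (by omega : ¬ t < k), if_neg (by omega : ¬ t < k + L2),
      if_neg (by omega : ¬ t < k + L2 + (k - 1))]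
  have hbr : ∀ t, t < N → (t < k) ∨ (k ≤ t ∧ t < k + L2) ∨
      (k + L2 ≤ t ∧ t < k + L2 + (k - 1)) ∨ (t = k + L2 + (k - 1)) := by
    intro t ht
    omega
  set LB : List (Fin n × W) := (List.range N).map g with hLB
  have hLBlen : LB.length = N := by rw [hLB, List.length_map, List.length_range]
  have hLBget : ∀ i (h : i < LB.length), LB.get ⟨i, h⟩ = g i := by
    intro i h
    show (List.map g (List.range N))[i]'h = g i
    simp
  have hnd : LB.Nodup := by
    rw [hLB]
    refine List.Nodup.map_on ?_ List.nodup_range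
    intro t ht t' ht' he
    rw [List.mem_range] at ht ht'
    rcases hbr t ht with h1 | ⟨h1, h2⟩ | ⟨h1, h2⟩ | h1 <;>
      rcases hbr t' ht' with h1' | ⟨h1', h2'⟩ | ⟨h1', h2'⟩ | h1'
    · rw [hg1 t h1, hg1 t' h1'] at he
      obtain ⟨-, hw⟩ := Prod.ext_iff.mp he
      exact hndSH t t' h1 h1' hw
    · rw [hg1 t h1, hg2 t' h1' h2'] at he
      obtain ⟨hc, -⟩ := Prod.ext_iff.mp he
      have := hfinj _ _ (by omega) (by omega) hc
      omega
    · rw [hg1 t h1, hg3 t' h1' h2'] at he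
      obtain ⟨hc, -⟩ := Prod.ext_iff.mp he
      have := hfinj _ _ (by omega) (by omega) hc
      omega
    · rw [hg1 t h1, hg4 t' (by omega)] at he
      obtain ⟨hc, -⟩ := Prod.ext_iff.mp he
      have := hfinj _ _ (by omega) (by omega) hc
      omega
    · rw [hg2 t h1 h2, hg1 t' h1'] at he
      obtain ⟨hc, -⟩ := Prod.ext_iff.mp he
      have := hfinj _ _ (by omega) (by omega) hc
      omega
    · rw [hg2 t h1 h2, hg2 t' h1' h2'] at he
      obtain ⟨hc, -⟩ := Prod.ext_iff.mp he
      have := hfinj _ _ (by omega) (by omega) hc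
      omega
    · rw [hg2 t h1 h2, hg3 t' h1' h2'] at he
      obtain ⟨hc, -⟩ := Prod.ext_iff.mp he
      have := hfinj _ _ (by omega) (by omega) hc
      omega
    · rw [hg2 t h1 h2, hg4 t' (by omega)] at he
      obtain ⟨hc, -⟩ := Prod.ext_iff.mp he
      have := hfinj _ _ (by omega) (by omega) hc
      omega
    · rw [hg3 t h1 h2, hg1 t' h1'] at he
      obtain ⟨hc, -⟩ := Prod.ext_iff.mp he
      have := hfinj _ _ (by omega) (by omega) hc
      omega
    · rw [hg3 t h1 h2, hg2 t' h1' h2'] at he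
      obtain ⟨hc, -⟩ := Prod.ext_iff.mp he
      have := hfinj _ _ (by omega) (by omega) hc
      omega
    · rw [hg3 t h1 h2, hg3 t' h1' h2'] at he
      obtain ⟨-, hw⟩ := Prod.ext_iff.mp he
      have := hndSH _ _ (by omega) (by omega) hw
      omega
    · rw [hg3 t h1 h2, hg4 t' (by omega)] at he
      obtain ⟨hc, -⟩ := Prod.ext_iff.mp he
      have := hfinj _ _ (by omega) (by omega) hc
      omega
    · rw [hg4 t (by omega), hg1 t' h1'] at he
      obtain ⟨hc, -⟩ := Prod.ext_iff.mp he
      have := hfinj _ _ (by omega) (by omega) hc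
      omega
    · rw [hg4 t (by omega), hg2 t' h1' h2'] at he
      obtain ⟨hc, -⟩ := Prod.ext_iff.mp he
      have := hfinj _ _ (by omega) (by omega) hc
      omega
    · rw [hg4 t (by omega), hg3 t' h1' h2'] at he
      obtain ⟨hc, -⟩ := Prod.ext_iff.mp he
      have := hfinj _ _ (by omega) (by omega) hc
      omega
    · omega
  have hpre : Pre (Lex (pathPow n m) H) LB := by
    rw [pre_iff_indexed]
    refine ⟨hnd, ?_⟩
    intro i h
    rw [hLBget i h]
    have hiN : i < N := by rwa [hLBlen] at h
    rcases hbr i hiN with h1 | ⟨h1, h2⟩ | ⟨h1, h2⟩ | h1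
    · obtain ⟨x, hx1, hx2⟩ := hlegSH i h1
      rw [hg1 i h1]
      refine ⟨(f 0, x), ?_, ?_⟩
      · rw [mem_cn_lex]; exact Or.inl ⟨rfl, hx1⟩
      · intro s hs hsi hmem
        rw [hLBget s hs] at hmem
        have hsk : s < k := by omega
        rw [hg1 s hsk, mem_cn_lex] at hmem
        rcases hmem with ⟨-, hx⟩ | ⟨hne, -⟩
        · exact hx2 s hsi hx
        · exact hne rfl
    · rw [hg2 i h1 h2]
      refine ⟨(f (i - k + 1 + m), wl), ?_, ?_⟩
      · rw [mem_cn_lex]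
        refine Or.inr ⟨?_, ?_⟩
        · intro hcon
          have := hfinj _ _ (by omega) (by omega) hcon
          omega
        · rw [fval _ (by omega), fval _ (by omega), ndist_eq]
          omega
      · intro s hs hsi hmem
        rw [hLBget s hs] at hmem
        have hsN : s < N := by rwa [hLBlen] at hs
        rcases hbr s hsN with hs1 | ⟨hs1, hs2⟩ | ⟨hs1, hs2⟩ | hs1
        · rw [hg1 s hs1, mem_cn_lex] at hmem
          rcases hmem with ⟨hcq, -⟩ | ⟨-, hd⟩
          · have := hfinj _ _ (by omega) (by omega) hcq; omega
          · rw [fval _ (by omega), fval _ (by omega), ndist_eq] at hd; omega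
        · rw [hg2 s hs1 hs2, mem_cn_lex] at hmem
          rcases hmem with ⟨hcq, -⟩ | ⟨-, hd⟩
          · have := hfinj _ _ (by omega) (by omega) hcq; omega
          · rw [fval _ (by omega), fval _ (by omega), ndist_eq] at hd; omega
        · omega
        · omega
    · obtain ⟨x, hx1, hx2⟩ := hlegSH (i - (k + L2)) (by omega)
      rw [hg3 i h1 h2]
      refine ⟨(f (n - 1), x), ?_, ?_⟩
      · rw [mem_cn_lex]; exact Or.inl ⟨rfl, hx1⟩
      · intro s hs hsi hmem
        rw [hLBget s hs] at hmem
        have hsN : s < N := by rwa [hLBlen] at hs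
        rcases hbr s hsN with hs1 | ⟨hs1, hs2⟩ | ⟨hs1, hs2⟩ | hs1
        · rw [hg1 s hs1, mem_cn_lex] at hmem
          rcases hmem with ⟨hcq, -⟩ | ⟨-, hd⟩
          · have := hfinj _ _ (by omega) (by omega) hcq; omega
          · rw [fval _ (by omega), fval _ (by omega), ndist_eq] at hd; omega
        · rw [hg2 s hs1 hs2, mem_cn_lex] at hmem
          rcases hmem with ⟨hcq, -⟩ | ⟨-, hd⟩
          · have := hfinj _ _ (by omega) (by omega) hcq; omega
          · rw [fval _ (by omega), fval _ (by omega), ndist_eq] at hd; omega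
        · rw [hg3 s hs1 hs2, mem_cn_lex] at hmem
          rcases hmem with ⟨-, hx⟩ | ⟨hne, -⟩
          · exact hx2 _ (by omega) hx
          · exact hne rfl
        · omega
    · obtain ⟨x, hx1, hx2⟩ := hlegSH (k - 1) (by omega)
      rw [hg4 i (by omega)]
      refine ⟨(f (n - 1), x), ?_, ?_⟩
      · rw [mem_cn_lex]
        refine Or.inr ⟨?_, ?_⟩
        · intro hcon
          have := hfinj _ _ (by omega) (by omega) hcon
          omega
        · rw [fval _ (by omega), fval _ (by omega), ndist_eq]
          omega
      · intro s hs hsi hmem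
        rw [hLBget s hs] at hmem
        have hsN : s < N := by rwa [hLBlen] at hs
        rcases hbr s hsN with hs1 | ⟨hs1, hs2⟩ | ⟨hs1, hs2⟩ | hs1
        · rw [hg1 s hs1, mem_cn_lex] at hmem
          rcases hmem with ⟨hcq, -⟩ | ⟨-, hd⟩
          · have := hfinj _ _ (by omega) (by omega) hcq; omega
          · rw [fval _ (by omega), fval _ (by omega), ndist_eq] at hd; omega
        · rw [hg2 s hs1 hs2, mem_cn_lex] at hmem
          rcases hmem with ⟨hcq, -⟩ | ⟨-, hd⟩
          · have := hfinj _ _ (by omega) (by omega) hcq; omega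
          · rw [fval _ (by omega), fval _ (by omega), ndist_eq] at hd; omega
        · rw [hg3 s hs1 hs2, mem_cn_lex] at hmem
          rcases hmem with ⟨-, hx⟩ | ⟨hne, -⟩
          · exact hx2 _ (by omega) hx
          · exact hne rfl
        · omega
  have hmemLB : ∀ t, t < N → g t ∈ LB := by
    intro t ht
    rw [hLB]
    exact List.mem_map_of_mem (f := g) (List.mem_range.mpr ht)
  have hdom : cnUnion (Lex (pathPow n m) H) LB = Set.univ := by
    rw [← dominates_iff]
    rintro ⟨c, x⟩
    rcases Nat.lt_or_ge c.val 1 with hc | hc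
    · obtain ⟨s, hs, hx⟩ := hdomSH x
      refine ⟨g s, hmemLB s (by omega), ?_⟩
      rw [hg1 s hs, mem_cn_lex]
      refine Or.inl ⟨Fin.ext ?_, hx⟩
      rw [fval 0 (by omega)]
      omega
    rcases Nat.lt_or_ge c.val (m + 1) with hc2 | hc2
    · refine ⟨g 0, hmemLB 0 (by omega), ?_⟩
      rw [hg1 0 (by omega), mem_cn_lex]
      refine Or.inr ⟨?_, ?_⟩
      · intro hcon
        have := congrArg Fin.val hcon
        rw [fval 0 (by omega)] at this
        omega
      · rw [fval 0 (by omega), ndist_eq]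
        omega
    rcases Nat.lt_or_ge c.val (n - 1) with hc3 | hc3
    · refine ⟨g (k + (c.val - m - 1)), hmemLB _ (by omega), ?_⟩
      rw [hg2 _ (by omega) (by omega), mem_cn_lex]
      refine Or.inr ⟨?_, ?_⟩
      · intro hcon
        have := congrArg Fin.val hcon
        rw [fval _ (by omega)] at this
        omega
      · rw [fval _ (by omega), ndist_eq]
        omega
    · refine ⟨g (k + L2 + (k - 1)), hmemLB _ (by omega), ?_⟩
      rw [hg4 _ (by omega), mem_cn_lex]
      have hcval : c.val = n - 1 := by
        have := c.isLt
        omega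
      refine Or.inr ⟨?_, ?_⟩
      · intro hcon
        have := congrArg Fin.val hcon
        rw [fval _ (by omega)] at this
        omega
      · rw [fval _ (by omega), ndist_eq]
        omega
  have hleg : IsLegal (Lex (pathPow n m) H) LB := (isLegal_iff _).mpr ⟨hpre, hdom⟩
  have hle : N ≤ gammaGr (Lex (pathPow n m) H) :=
    le_csSup (bddAbove_lengths (Lex (pathPow n m) H)) ⟨LB, hleg, hLBlen⟩
  omega

end Lower
end GrundyDom
namespace GrundyDom
section Glue
open scoped Classical
variable {W : Type*} [Fintype W] [Nonempty W] {H : SimpleGraph W}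

lemma glue {n' m : ℕ} (hm : 1 ≤ m) (hn' : 1 ≤ n') :
    gammaGr (Lex (pathPow n' m) H) + gammaGr H ≤ gammaGr (Lex (pathPow (n' + m + 1) m) H) := by
  classical
  set n : ℕ := n' + m + 1 with hndef
  have hn0 : 0 < n := by omega
  have hn'0 : 0 < n' := by omega
  obtain ⟨SH, hSH, hSHlen⟩ := gammaGr_spec H
  set k := gammaGr H with hk
  have hk1 : 1 ≤ k := gammaGr_H_pos
  obtain ⟨T, hT, hTlen⟩ := gammaGr_spec (Lex (pathPow n' m) H)
  set p := gammaGr (Lex (pathPow n' m) H) with hp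
  set f : ℕ → Fin n := fun i => ⟨i % n, Nat.mod_lt i hn0⟩ with hf
  have fval : ∀ i, i < n → (f i).val = i := fun i h => Nat.mod_eq_of_lt h
  have hfinj : ∀ a b, a < n → b < n → f a = f b → a = b := by
    intro a b ha hb he
    have := congrArg Fin.val he
    rwa [fval a ha, fval b hb] at this
  set sh : ℕ → W := fun s => SH.getD s (Classical.arbitrary W) with hshdef
  have hsh : ∀ s (h : s < SH.length), sh s = SH.get ⟨s, h⟩ := by
    intro s h
    rw [hshdef]
    simp only []
    rw [List.getD_eq_getElem SH _ h]
    rfl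
  have hndSH : ∀ s s', s < k → s' < k → sh s = sh s' → s = s' := by
    intro s s' h h' he
    rw [hsh s (by omega), hsh s' (by omega)] at he
    have := (List.Nodup.get_inj_iff hSH.nodup).mp he
    exact congrArg Fin.val this
  have hlegSH : ∀ i, i < k → ∃ x, x ∈ cn H (sh i) ∧ ∀ s, s < i → x ∉ cn H (sh s) := by
    intro i hi
    obtain ⟨-, hleg⟩ := (pre_iff_indexed H).mp hSH.pre
    obtain ⟨x, hx1, hx2⟩ := hleg i (by omega)
    refine ⟨x, by rw [hsh i (by omega)]; exact hx1, fun s hs => ?_⟩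
    rw [hsh s (by omega)]
    exact hx2 s (by omega) hs
  have hdomSH : ∀ x : W, ∃ s, s < k ∧ x ∈ cn H (sh s) := by
    intro x
    obtain ⟨u, hu, hx⟩ := hSH.dominates x
    obtain ⟨s, hs, rfl⟩ := List.mem_iff_get.mp hu
    refine ⟨s.val, by omega, ?_⟩
    rw [hsh s.val s.isLt]
    convert hx
  set d0' : Fin n' × W := (⟨0, hn'0⟩, Classical.arbitrary W) with hd0'
  set tsh : ℕ → Fin n' × W := fun s => T.getD s d0' with htshdef
  have htsh : ∀ s (h : s < T.length), tsh s = T.get ⟨s, h⟩ := by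
    intro s h
    rw [htshdef]
    simp only []
    rw [List.getD_eq_getElem T _ h]
    rfl
  have hndT : ∀ s s', s < p → s' < p → tsh s = tsh s' → s = s' := by
    intro s s' h h' he
    rw [htsh s (by omega), htsh s' (by omega)] at he
    have := (List.Nodup.get_inj_iff hT.nodup).mp he
    exact congrArg Fin.val this
  have hlegT : ∀ i, i < p → ∃ v, v ∈ cn (Lex (pathPow n' m) H) (tsh i) ∧
      ∀ s, s < i → v ∉ cn (Lex (pathPow n' m) H) (tsh s) := by
    intro i hi
    obtain ⟨-, hleg⟩ := (pre_iff_indexed _).mp hT.pre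
    obtain ⟨v, hv1, hv2⟩ := hleg i (by omega)
    refine ⟨v, by rw [htsh i (by omega)]; exact hv1, fun s hs => ?_⟩
    rw [htsh s (by omega)]
    exact hv2 s (by omega) hs
  have hdomT : ∀ v : Fin n' × W, ∃ s, s < p ∧ v ∈ cn (Lex (pathPow n' m) H) (tsh s) := by
    intro v
    obtain ⟨u, hu, hv⟩ := hT.dominates v
    obtain ⟨s, hs, rfl⟩ := List.mem_iff_get.mp hu
    refine ⟨s.val, by omega, ?_⟩
    rw [htsh s.val s.isLt]
    convert hv
  set ι : Fin n' × W → Fin n × W := fun v => (f (v.1.val + m + 1), v.2) with hι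
  have hcnι : ∀ a b : Fin n' × W, b ∈ cn (Lex (pathPow n' m) H) a ↔
      ι b ∈ cn (Lex (pathPow n m) H) (ι a) := by
    rintro ⟨a1, a2⟩ ⟨b1, b2⟩
    rw [mem_cn_lex, hι]
    simp only []
    rw [mem_cn_lex]
    have ha1 := a1.isLt
    have hb1 := b1.isLt
    constructor
    · rintro (⟨rfl, hx⟩ | ⟨hne, hd⟩)
      · exact Or.inl ⟨rfl, hx⟩
      · refine Or.inr ⟨?_, ?_⟩
        · intro hcon
          have := hfinj _ _ (by omega) (by omega) hcon
          exact hne (Fin.ext (by omega))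
        · rw [fval _ (by omega), fval _ (by omega), ndist_eq]
          rw [ndist_eq] at hd
          omega
    · rintro (⟨hcq, hx⟩ | ⟨hne, hd⟩)
      · have := hfinj _ _ (by omega) (by omega) hcq
        exact Or.inl ⟨Fin.ext (by omega), hx⟩
      · refine Or.inr ⟨?_, ?_⟩
        · intro hcon
          exact hne (by rw [hcon])
        · rw [fval _ (by omega), fval _ (by omega), ndist_eq] at hd
          rw [ndist_eq]
          omega
  set N : ℕ := k + p with hN
  set g : ℕ → Fin n × W := fun t => if t < k then (f 0, sh t) else ι (tsh (t - k)) with hg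
  have hg1 : ∀ t, t < k → g t = (f 0, sh t) := by
    intro t ht
    rw [hg]
    simp only [if_pos ht]
  have hg2 : ∀ t, k ≤ t → g t = ι (tsh (t - k)) := by
    intro t ht
    rw [hg]
    simp only [if_neg (by omega : ¬ t < k)]
  set LG : List (Fin n × W) := (List.range N).map g with hLG
  have hLGlen : LG.length = N := by rw [hLG, List.length_map, List.length_range]
  have hLGget : ∀ i (h : i < LG.length), LG.get ⟨i, h⟩ = g i := by
    intro i h
    show (List.map g (List.range N))[i]'h = g i
    simp
  have hιcol : ∀ v : Fin n' × W, ((ι v).1).val = v.1.val + m + 1 := by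
    rintro ⟨v1, v2⟩
    rw [hι]
    simp only []
    exact fval _ (by omega)
  have hnd : LG.Nodup := by
    rw [hLG]
    refine List.Nodup.map_on ?_ List.nodup_range
    intro t ht t' ht' he
    rw [List.mem_range] at ht ht'
    rcases Nat.lt_or_ge t k with h1 | h1 <;> rcases Nat.lt_or_ge t' k with h1' | h1'
    · rw [hg1 t h1, hg1 t' h1'] at he
      obtain ⟨-, hw⟩ := Prod.ext_iff.mp he
      exact hndSH t t' h1 h1' hw
    · rw [hg1 t h1, hg2 t' h1'] at he
      obtain ⟨hc, -⟩ := Prod.ext_iff.mp he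
      have h2 := congrArg Fin.val hc
      rw [fval 0 (by omega), hιcol] at h2
      omega
    · rw [hg2 t h1, hg1 t' h1'] at he
      obtain ⟨hc, -⟩ := Prod.ext_iff.mp he
      have h2 := congrArg Fin.val hc
      rw [fval 0 (by omega), hιcol] at h2
      omega
    · rw [hg2 t h1, hg2 t' h1'] at he
      obtain ⟨hc, hw⟩ := Prod.ext_iff.mp he
      have h2 := congrArg Fin.val hc
      rw [hιcol, hιcol] at h2
      have hcol' : (tsh (t - k)).1 = (tsh (t' - k)).1 := Fin.ext (by omega)
      have : tsh (t - k) = tsh (t' - k) := Prod.ext hcol' hw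
      have := hndT _ _ (by omega) (by omega) this
      omega
  have hpre : Pre (Lex (pathPow n m) H) LG := by
    rw [pre_iff_indexed]
    refine ⟨hnd, ?_⟩
    intro i h
    rw [hLGget i h]
    have hiN : i < N := by rwa [hLGlen] at h
    rcases Nat.lt_or_ge i k with h1 | h1
    · obtain ⟨x, hx1, hx2⟩ := hlegSH i h1
      rw [hg1 i h1]
      refine ⟨(f 0, x), ?_, ?_⟩
      · rw [mem_cn_lex]; exact Or.inl ⟨rfl, hx1⟩
      · intro s hs hsi hmem
        rw [hLGget s hs] at hmem
        have hsk : s < k := by omega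
        rw [hg1 s hsk, mem_cn_lex] at hmem
        rcases hmem with ⟨-, hx⟩ | ⟨hne, -⟩
        · exact hx2 s hsi hx
        · exact hne rfl
    · obtain ⟨v, hv1, hv2⟩ := hlegT (i - k) (by omega)
      rw [hg2 i h1]
      refine ⟨ι v, ?_, ?_⟩
      · rw [← hcnι]; exact hv1
      · intro s hs hsi hmem
        rw [hLGget s hs] at hmem
        rcases Nat.lt_or_ge s k with hs1 | hs1
        · rw [hg1 s hs1, mem_cn_lex] at hmem
          rcases hmem with ⟨hcq, -⟩ | ⟨-, hd⟩
          · have h2 := congrArg Fin.val hcq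
            rw [fval 0 (by omega), hιcol] at h2
            omega
          · rw [fval 0 (by omega), hιcol, ndist_eq] at hd
            omega
        · rw [hg2 s hs1, ← hcnι] at hmem
          exact hv2 (s - k) (by omega) hmem
  have hmemLG : ∀ t, t < N → g t ∈ LG := by
    intro t ht
    rw [hLG]
    exact List.mem_map_of_mem (f := g) (List.mem_range.mpr ht)
  have hdom : cnUnion (Lex (pathPow n m) H) LG = Set.univ := by
    rw [← dominates_iff]
    rintro ⟨c, x⟩
    rcases Nat.lt_or_ge c.val 1 with hc | hc
    · obtain ⟨s, hs, hx⟩ := hdomSH x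
      refine ⟨g s, hmemLG s (by omega), ?_⟩
      rw [hg1 s hs, mem_cn_lex]
      refine Or.inl ⟨Fin.ext ?_, hx⟩
      rw [fval 0 (by omega)]
      omega
    rcases Nat.lt_or_ge c.val (m + 1) with hc2 | hc2
    · refine ⟨g 0, hmemLG 0 (by omega), ?_⟩
      rw [hg1 0 (by omega), mem_cn_lex]
      refine Or.inr ⟨?_, ?_⟩
      · intro hcon
        have := congrArg Fin.val hcon
        rw [fval 0 (by omega)] at this
        omega
      · rw [fval 0 (by omega), ndist_eq]
        omega
    · have hcn' : c.val - (m + 1) < n' := by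
        have := c.isLt
        omega
      obtain ⟨s, hs, hv⟩ := hdomT (⟨c.val - (m + 1), hcn'⟩, x)
      refine ⟨g (k + s), hmemLG (k + s) (by omega), ?_⟩
      rw [hg2 (k + s) (by omega)]
      have : (k + s) - k = s := by omega
      rw [this]
      rw [hcnι] at hv
      have hιv : ι (⟨c.val - (m + 1), hcn'⟩, x) = (c, x) := by
        rw [hι]
        simp only []
        refine Prod.ext ?_ rfl
        refine Fin.ext ?_
        rw [fval _ (by omega)]
        simp only []
        omega
      rwa [hιv] at hv
  have hleg : IsLegal (Lex (pathPow n m) H) LG := (isLegal_iff _).mpr ⟨hpre, hdom⟩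
  have hle : N ≤ gammaGr (Lex (pathPow n m) H) :=
    le_csSup (bddAbove_lengths (Lex (pathPow n m) H)) ⟨LG, hleg, hLGlen⟩
  omega

end Glue
end GrundyDom
namespace GrundyDom
section LowerA
open scoped Classical
variable {W : Type*} [Fintype W] [Nonempty W] {H : SimpleGraph W}

lemma lowerA {n m : ℕ} (hm : 1 ≤ m) (hn : m + 2 ≤ n) (hk : m + 1 ≤ gammaGr H) :
    ((n + m) / (m + 1)) * (gammaGr H - (m + 1)) + n + m ≤
      gammaGr (Lex (pathPow n m) H) := by
  induction n using Nat.strong_induction_on with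
  | _ n ih =>
    rcases Nat.lt_or_ge n (2 * m + 3) with hsm | hbig
    · have hq : (n + m) / (m + 1) = 2 :=
        Nat.div_eq_of_lt_le (by omega) (by omega)
      have hlb := lowerB (H := H) hm hn
      rw [hq]
      omega
    · obtain ⟨n', rfl⟩ : ∃ n', n = n' + m + 1 := ⟨n - (m + 1), by omega⟩
      have hglue := glue (H := H) hm (by omega : 1 ≤ n')
      have hih := ih n' (by omega) (by omega)
      have hqstep : (n' + m + 1 + m) / (m + 1) = (n' + m) / (m + 1) + 1 := by
        have he : n' + m + 1 + m = (n' + m) + (m + 1) := by ring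
        rw [he, Nat.add_div_right _ (by omega)]
      rw [hqstep]
      have e : ((n' + m) / (m + 1) + 1) * (gammaGr H - (m + 1)) =
          ((n' + m) / (m + 1)) * (gammaGr H - (m + 1)) + (gammaGr H - (m + 1)) := by ring
      omega

end LowerA
end GrundyDom
open GrundyDom Finset

/-- formulas for `γ_gr(P_n^m ∘ H)` according to whether
`γ_gr(H) ≥ m+1` or `γ_gr(H) ≤ m`; here `⌈n/(m+1)⌉ = (n+m)/(m+1)` in ℕ. -/
theorem stmt14 (n m : ℕ) (hm : 1 ≤ m) (hn : m + 2 ≤ n)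
    {W : Type*} [Fintype W] [Nonempty W] (H : SimpleGraph W) :
    (m + 1 ≤ gammaGr H →
      (gammaGr (Lex (pathPow n m) H) : ℤ) =
        (((n + m) / (m + 1) : ℕ) : ℤ) * ((gammaGr H : ℤ) - (m + 1)) + n + m) ∧
    (gammaGr H ≤ m →
      (gammaGr (Lex (pathPow n m) H) : ℤ) =
        2 * (gammaGr H : ℤ) + n - m - 2) := by
  constructor
  · intro hk
    have hub := upper_caseA (H := H) hm hn hk
    have hlb := lowerA (H := H) hm hn hk
    have heq : gammaGr (Lex (pathPow n m) H) =
        ((n + m) / (m + 1)) * (gammaGr H - (m + 1)) + n + m := le_antisymm hub hlb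
    rw [heq]
    push_cast [Nat.cast_sub hk]
    ring
  · intro hk
    have hub := upper_caseB (H := H) hm hn hk
    have hlb := lowerB (H := H) hm hn
    omega
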